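/- arXiv:0704.3417 — 2 statements merged into one kernel-verified Lean document; each statement's English description precedes it below -/
import Mathlib

section
/- For every positive long root α ∈ Φ_lg ∩ Φ⁺, one has l(x_α s_{α̃}) = l(s_{α̃}) − l(x_α). -/
open scoped RealInnerProductSpace Classical

noncomputable section

variable {V : Type} [NormedAddCommGroup V] [InnerProductSpace ℝ V] [FiniteDimensional ℝ V]

/-- The orthogonal reflection of `V` in the hyperplane orthogonal to `α`
(the reflection `s_α` when `α` is a root). -/
def sref (α : V) : V ≃ₗᵢ[ℝ] V := Submodule.reflection (Submodule.span ℝ {α})ᗮ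

/-- The pairing `⟨β, γ∨⟩ = 2(β|γ)/(γ|γ)` of a vector with the coroot of `γ`. -/
def cpair (β γ : V) : ℝ := 2 * ⟪β, γ⟫ / ⟪γ, γ⟫

/-- An irreducible reduced (crystallographic) root system in the real inner product
space `V`, the inner product being invariant under the Weyl group (automatic, since
reflections are isometries), normalized so that the shortest roots have squared length `1`. -/
structure NRootSystem (V : Type) [NormedAddCommGroup V] [InnerProductSpace ℝ V]
    [FiniteDimensional ℝ V] where
  Φ : Finset V
  nonempty : Φ.Nonempty
  zero_not_mem : (0 : V) ∉ Φ
  span_eq_top : Submodule.span ℝ (Φ : Set V) = ⊤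
  reduced : ∀ α ∈ Φ, ∀ t : ℝ, t • α ∈ Φ → t = 1 ∨ t = -1
  pairing_int : ∀ α ∈ Φ, ∀ β ∈ Φ, ∃ n : ℤ, 2 * ⟪β, α⟫ = n * ⟪α, α⟫
  reflect_mem : ∀ α ∈ Φ, ∀ β ∈ Φ, sref α β ∈ Φ
  irreducible : ∀ S : Finset V, S ⊆ Φ → S.Nonempty → (Φ \ S).Nonempty →
    ∃ α ∈ S, ∃ β ∈ Φ \ S, ⟪α, β⟫ ≠ 0
  norm_one_le : ∀ α ∈ Φ, 1 ≤ ⟪α, α⟫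
  exists_norm_one : ∃ α ∈ Φ, ⟪α, α⟫ = 1

namespace NRootSystem

variable (R : NRootSystem V)

/-- `r`, the maximal squared length of a root. -/
def r : ℝ := R.Φ.sup' R.nonempty fun α => ⟪α, α⟫

/-- long roots -/
def IsLong (α : V) : Prop := α ∈ R.Φ ∧ ⟪α, α⟫ = R.r

/-- short roots -/
def IsShort (α : V) : Prop := α ∈ R.Φ ∧ ⟪α, α⟫ < R.r

/-- The Weyl group `W`, generated by the reflections in the roots. -/
def Weyl : Subgroup (V ≃ₗᵢ[ℝ] V) := Subgroup.closure (sref '' (R.Φ : Set V))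

end NRootSystem

/-- The standard parabolic subgroup `W_I` generated by the reflections in `I ⊆ Δ`. -/
def WeylP (I : Finset V) : Subgroup (V ≃ₗᵢ[ℝ] V) := Subgroup.closure (sref '' (I : Set V))

/-- A base (set of simple roots) `Δ` of the root system, together with the
integral coordinates `coeff γ α` of each root `γ` in the basis `Δ`; every root is a
nonnegative or a nonpositive integral combination of the simple roots. -/
structure Base {V : Type} [NormedAddCommGroup V] [InnerProductSpace ℝ V]
    [FiniteDimensional ℝ V] (R : NRootSystem V) where
  Δ : Finset V
  subset : Δ ⊆ R.Φ
  indep : LinearIndependent ℝ (fun a : {x : V // x ∈ Δ} => (a : V))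
  coeff : V → V → ℤ
  coeff_spec : ∀ γ ∈ R.Φ, γ = ∑ α ∈ Δ, (coeff γ α : ℝ) • α
  coeff_sign : ∀ γ ∈ R.Φ, (∀ α ∈ Δ, 0 ≤ coeff γ α) ∨ (∀ α ∈ Δ, coeff γ α ≤ 0)

namespace Base

variable {R : NRootSystem V} (B : Base R)

/-- positive roots -/
def IsPos (γ : V) : Prop := γ ∈ R.Φ ∧ ∀ α ∈ B.Δ, 0 ≤ B.coeff γ α

/-- negative roots -/
def IsNeg (γ : V) : Prop := γ ∈ R.Φ ∧ ∀ α ∈ B.Δ, B.coeff γ α ≤ 0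

/-- the height of a root -/
def ht (γ : V) : ℤ := ∑ α ∈ B.Δ, B.coeff γ α

/-- the dual height `ht∨ γ = ht (γ∨)`: the height of the coroot `γ∨ = 2γ/(γ|γ)`
with respect to the basis of simple coroots `α∨ = 2α/(α|α)`, `α ∈ Δ`. -/
def htv (γ : V) : ℝ := ∑ α ∈ B.Δ, (B.coeff γ α : ℝ) * ⟪α, α⟫ / ⟪γ, γ⟫

/-- The length of `w`: the minimal length of an expression of `w` as a product of
simple reflections. -/
def len (w : V ≃ₗᵢ[ℝ] V) : ℕ :=
  sInf {n | ∃ g : Fin n → V, (∀ i, g i ∈ B.Δ) ∧ w = (List.ofFn fun i => sref (g i)).prod}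

/-- `w` is the longest element of the subgroup `H`. -/
def IsLongest (H : Subgroup (V ≃ₗᵢ[ℝ] V)) (w : V ≃ₗᵢ[ℝ] V) : Prop :=
  w ∈ H ∧ ∀ u ∈ H, B.len u ≤ B.len w

/-- `X_I = {w ∈ W | w(Φ_I⁺) ⊆ Φ⁺}`, the set of minimal length coset
representatives of `W/W_I`. -/
def XI (I : Finset V) : Set (V ≃ₗᵢ[ℝ] V) :=
  {w | w ∈ R.Weyl ∧
    ∀ γ, γ ∈ R.Φ → γ ∈ Submodule.span ℝ (I : Set V) → B.IsPos γ → B.IsPos (w γ)}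

/-- `h` is the highest root. -/
def IsHighest (h : V) : Prop :=
  h ∈ R.Φ ∧ ∀ γ ∈ R.Φ, ∀ α ∈ B.Δ, B.coeff γ α ≤ B.coeff h α

/-- `Ĩ = {α ∈ Δ | (h|α) = 0}`, the simple roots orthogonal to the highest root `h`. -/
def Itil (h : V) : Finset V := B.Δ.filter fun α => ⟪h, α⟫ = 0

/-- The level `L(α)` of a long root `α`, where `h` is the highest root:
`L(α) = ht∨(h) − ht∨(α)` if `α > 0` and `L(α) = ht∨(h) − ht∨(α) − 1` if `α < 0`. -/
def level (h α : V) : ℝ :=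
  if B.IsPos α then B.htv h - B.htv α else B.htv h - B.htv α - 1

/-- The elementary step relation `β →_γ α` on long roots (`γ` a positive root):
`α = s_γ(β)` and `L(α) = L(β) + 1`. -/
def Step (h γ β α : V) : Prop :=
  R.IsLong β ∧ R.IsLong α ∧ B.IsPos γ ∧ α = sref γ β ∧
    B.level h α = B.level h β + 1

/-- `g` is the sequence of positive roots of a path
`β = β₀ →_{g 0} β₁ →_{g 1} ⋯ →_{g (n-1)} β_n = α` from `β` to `α`. -/
def IsPathWord (h : V) {n : ℕ} (g : Fin n → V) (β α : V) : Prop :=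
  ∃ c : Fin (n + 1) → V, c 0 = β ∧ c (Fin.last n) = α ∧
    ∀ i : Fin n, B.Step h (g i) (c i.castSucc) (c i.succ)

/-- a path all of whose steps use simple roots -/
def IsSimplePathWord (h : V) {n : ℕ} (g : Fin n → V) (β α : V) : Prop :=
  B.IsPathWord h g β α ∧ ∀ i, g i ∈ B.Δ

/-- there is a path from `β` to `α`, i.e. `α ⪯ β` -/
def HasPath (h β α : V) : Prop := ∃ (n : ℕ) (g : Fin n → V), B.IsPathWord h g β α

/-- there is a simple path from `β` to `α` -/
def HasSimplePath (h β α : V) : Prop :=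
  ∃ (n : ℕ) (g : Fin n → V), B.IsSimplePathWord h g β α

/-- The covering relation `w →_γ w'` for the Bruhat order:
`w' = s_γ w` and `l(w') = l(w) + 1`, for a positive root `γ`. -/
def BStep (γ : V) (w w' : V ≃ₗᵢ[ℝ] V) : Prop :=
  B.IsPos γ ∧ w' = sref γ * w ∧ B.len w' = B.len w + 1

/-- The Bruhat order on `W`: the reflexive–transitive closure of the covering
relations. -/
def bruhatLE : (V ≃ₗᵢ[ℝ] V) → (V ≃ₗᵢ[ℝ] V) → Prop :=
  Relation.ReflTransGen fun w w' => ∃ γ, B.BStep γ w w'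

/-- `x` is an element of `W` with `x(β) = α` of the minimal possible length
`|L(α) − L(β)|` (this is the element `x_{αβ}` when it exists). -/
def MinTake (h β α : V) (x : V ≃ₗᵢ[ℝ] V) : Prop :=
  x ∈ R.Weyl ∧ x β = α ∧ (B.len x : ℝ) = |B.level h α - B.level h β|

/-- `g` is a reduced expression of `x` as a product of simple reflections. -/
def IsReducedWord {n : ℕ} (g : Fin n → V) (x : V ≃ₗᵢ[ℝ] V) : Prop :=
  (∀ i, g i ∈ B.Δ) ∧ x = (List.ofFn fun i => sref (g i)).prod ∧ n = B.len x

/-- The depth of a positive root `β`: the minimal integer `k` such that there is an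
element `w` of `W` of length `k` with `w(β) < 0`. -/
def depth (β : V) : ℕ := sInf {n | ∃ w ∈ R.Weyl, B.len w = n ∧ B.IsNeg (w β)}

end Base

section Aux
namespace Base
variable {R : NRootSystem V} (B : Base R)

theorem sref_apply' (α : V) (v : V) :
    sref α v = v - (2 * ⟪v, α⟫ / ⟪α, α⟫) • α := by
  rw [sref, Submodule.reflection_orthogonal_apply, Submodule.reflection_singleton_apply]
  rw [real_inner_self_eq_norm_sq, real_inner_comm]
  rw [neg_sub, two_smul, two_mul, add_div, add_smul, sub_add_eq_sub_sub, sub_add_eq_sub_sub]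
  norm_cast

theorem sref_sref' (α v : V) : sref α (sref α v) = v := Submodule.reflection_reflection _ v

theorem sref_inv (α : V) : (sref α)⁻¹ = sref α :=
  inv_eq_of_mul_eq_one_right (by ext v; exact sref_sref' α v)

theorem sref_mul_self (α : V) : sref α * sref α = 1 := by
  ext v; exact sref_sref' α v

variable {B}

theorem sum_coeff_zero {c : V → ℝ} (h : ∑ α ∈ B.Δ, c α • α = 0) : ∀ α ∈ B.Δ, c α = 0 := by
  have h2 := linearIndependent_iff'.mp B.indep Finset.univ (fun a => c ↑a) ?_
  · intro α hα; exact h2 ⟨α, hα⟩ (Finset.mem_univ _)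
  · rw [Finset.univ_eq_attach]
    rw [Finset.sum_attach B.Δ (fun α => c α • α)]
    exact h

theorem coeff_unique {γ : V} (hγ : γ ∈ R.Φ) {f : V → ℝ}
    (h : γ = ∑ α ∈ B.Δ, f α • α) : ∀ α ∈ B.Δ, f α = B.coeff γ α := by
  have h0 : ∑ α ∈ B.Δ, (f α - B.coeff γ α) • α = 0 := by
    simp only [sub_smul, Finset.sum_sub_distrib]
    rw [← h, ← B.coeff_spec γ hγ, sub_self]
  intro α hα
  have := sum_coeff_zero h0 α hα
  linarith

theorem root_ne_zero {γ : V} (hγ : γ ∈ R.Φ) : γ ≠ 0 := fun h => R.zero_not_mem (h ▸ hγ)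

theorem inner_self_pos' {γ : V} (hγ : γ ∈ R.Φ) : (0:ℝ) < ⟪γ, γ⟫ :=
  lt_of_lt_of_le one_pos (R.norm_one_le γ hγ)

/-- the integer pairing -/
theorem pairing_exists {γ δ : V} (hγ : γ ∈ R.Φ) (hδ : δ ∈ R.Φ) :
    ∃ n : ℤ, 2 * ⟪γ, δ⟫ = n * ⟪δ, δ⟫ ∧ sref δ γ = γ - (n:ℝ) • δ := by
  obtain ⟨n, hn⟩ := R.pairing_int δ hδ γ hγ
  refine ⟨n, hn, ?_⟩
  rw [sref_apply', hn, mul_div_assoc, div_self (ne_of_gt (inner_self_pos' hδ)), mul_one]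

theorem pos_or_neg {γ : V} (hγ : γ ∈ R.Φ) : B.IsPos γ ∨ B.IsNeg γ := by
  rcases B.coeff_sign γ hγ with h | h
  · exact Or.inl ⟨hγ, h⟩
  · exact Or.inr ⟨hγ, h⟩

theorem not_pos_and_neg {γ : V} (hp : B.IsPos γ) (hn : B.IsNeg γ) : False := by
  apply root_ne_zero hp.1
  rw [B.coeff_spec γ hp.1]
  apply Finset.sum_eq_zero
  intro α hα
  have h1 := hp.2 α hα
  have h2 := hn.2 α hα
  have : B.coeff γ α = 0 := le_antisymm h2 h1
  rw [this]; simp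

theorem neg_root_mem {γ : V} (hγ : γ ∈ R.Φ) : -γ ∈ R.Φ := by
  have h := R.reflect_mem γ hγ γ hγ
  have e : sref γ γ = -γ := by
    rw [sref_apply', mul_div_assoc, div_self (ne_of_gt (inner_self_pos' hγ)), mul_one]
    module
  rwa [e] at h

theorem sref_self' {γ : V} (hγ : γ ∈ R.Φ) : sref γ γ = -γ := by
  rw [sref_apply', mul_div_assoc, div_self (ne_of_gt (inner_self_pos' hγ)), mul_one]
  module

theorem coeff_neg {γ : V} (hγ : γ ∈ R.Φ) : ∀ α ∈ B.Δ, B.coeff (-γ) α = - B.coeff γ α := by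
  have h : -γ = ∑ α ∈ B.Δ, (-(B.coeff γ α : ℝ)) • α := by
    have e : ∑ α ∈ B.Δ, (-(B.coeff γ α : ℝ)) • α = -∑ α ∈ B.Δ, ((B.coeff γ α : ℝ)) • α := by
      simp
    rw [e, ← B.coeff_spec γ hγ]
  intro α hα
  have := coeff_unique (neg_root_mem hγ) h α hα
  exact_mod_cast this.symm

theorem isNeg_iff {γ : V} (hγ : γ ∈ R.Φ) : B.IsNeg γ ↔ B.IsPos (-γ) := by
  constructor
  · intro hn
    refine ⟨neg_root_mem hγ, fun α hα => ?_⟩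
    rw [coeff_neg hγ α hα]
    linarith [hn.2 α hα]
  · intro hp
    refine ⟨hγ, fun α hα => ?_⟩
    have := hp.2 α hα
    rw [coeff_neg hγ α hα] at this
    linarith

theorem isPos_neg {γ : V} (hγ : γ ∈ R.Φ) (h : B.IsPos γ) : B.IsNeg (-γ) := by
  refine ⟨neg_root_mem hγ, fun α hα => ?_⟩
  rw [coeff_neg hγ α hα]
  linarith [h.2 α hα]

theorem coeff_simple {α : V} (hα : α ∈ B.Δ) :
    ∀ β ∈ B.Δ, B.coeff α β = if β = α then 1 else 0 := by
  intro β hβ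
  have h : α = ∑ β ∈ B.Δ, (if β = α then (1:ℝ) else 0) • β := by
    symm
    rw [Finset.sum_eq_single_of_mem α hα (fun b hb hne => by simp [hne])]
    simp
  have h2 := (coeff_unique (B.subset hα) h β hβ).symm
  by_cases hc : β = α <;> simp [hc] at h2 ⊢ <;> exact_mod_cast h2

theorem isPos_simple {α : V} (hα : α ∈ B.Δ) : B.IsPos α := by
  refine ⟨B.subset hα, fun β hβ => ?_⟩
  rw [coeff_simple hα β hβ]
  split <;> omega

/-- coefficients of a simple reflection of a root -/
theorem coeff_sref_simple {α γ : V} (hα : α ∈ B.Δ) (hγ : γ ∈ R.Φ) {n : ℤ}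
    (hn : sref α γ = γ - (n:ℝ) • α) :
    ∀ β ∈ B.Δ, B.coeff (sref α γ) β = B.coeff γ β - if β = α then n else 0 := by
  have hmem : sref α γ ∈ R.Φ := R.reflect_mem α (B.subset hα) γ hγ
  have h : sref α γ = ∑ β ∈ B.Δ, ((B.coeff γ β : ℝ) - if β = α then (n:ℝ) else 0) • β := by
    simp only [sub_smul, Finset.sum_sub_distrib, ite_smul, zero_smul]
    rw [← B.coeff_spec γ hγ, Finset.sum_ite_eq' B.Δ α (fun β => (n:ℝ) • β), if_pos hα, hn]
  intro β hβ
  have h3 := coeff_unique hmem h β hβ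
  have h4 : ((B.coeff (sref α γ) β : ℤ) : ℝ)
      = ((B.coeff γ β - if β = α then n else 0 : ℤ) : ℝ) := by
    rw [← h3]
    push_cast [apply_ite (fun z : ℤ => (z : ℝ))]
    ring
  exact_mod_cast h4

/-- key lemma: a simple reflection permutes the positive roots other than itself -/
theorem simple_perm {α γ : V} (hα : α ∈ B.Δ) (hγp : B.IsPos γ) (hne : γ ≠ α) :
    B.IsPos (sref α γ) := by
  have hγ := hγp.1
  have hαΦ := B.subset hα
  obtain ⟨n, hn, hs⟩ := pairing_exists hγ hαΦ
  have hmem : sref α γ ∈ R.Φ := R.reflect_mem α hαΦ γ hγ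
  have hco := coeff_sref_simple hα hγ hs
  -- find β ≠ α with positive coefficient
  have hexists : ∃ β ∈ B.Δ, β ≠ α ∧ 1 ≤ B.coeff γ β := by
    by_contra hc
    push_neg at hc
    have hzero : ∀ β ∈ B.Δ, β ≠ α → B.coeff γ β = 0 := by
      intro β hβ hne'
      have := hc β hβ hne'
      have := hγp.2 β hβ
      omega
    have hγeq : γ = (B.coeff γ α : ℝ) • α := by
      conv_lhs => rw [B.coeff_spec γ hγ]
      apply Finset.sum_eq_single_of_mem α hα
      intro β hβ h
      rw [hzero β hβ h]
      simp
    have := R.reduced α hαΦ (B.coeff γ α : ℝ) (by rw [← hγeq]; exact hγ)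
    rcases this with h1 | h1
    · apply hne; rw [hγeq, h1, one_smul]
    · exfalso
      have hα1 : B.coeff γ α = -1 := by exact_mod_cast h1
      apply not_pos_and_neg hγp
      refine ⟨hγ, fun β hβ => ?_⟩
      by_cases h : β = α
      · rw [h, hα1]; omega
      · rw [hzero β hβ h]
  obtain ⟨β, hβ, hβne, hβpos⟩ := hexists
  have hcoβ : B.coeff (sref α γ) β = B.coeff γ β := by rw [hco β hβ, if_neg hβne]; ring
  rcases pos_or_neg hmem with h | h
  · exact h
  · exfalso
    have := h.2 β hβ
    omega

variable (B) in
/-- `ws` is a word of simple reflections for `w` -/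
def Word (ws : List V) (w : V ≃ₗᵢ[ℝ] V) : Prop :=
  (∀ β ∈ ws, β ∈ B.Δ) ∧ w = (ws.map sref).prod

variable (B) in
/-- the inversion set -/
def Inv (w : V ≃ₗᵢ[ℝ] V) : Finset V :=
  R.Φ.filter (fun γ => B.IsPos γ ∧ B.IsNeg (w γ))

theorem mem_Inv {w : V ≃ₗᵢ[ℝ] V} {γ : V} :
    γ ∈ Inv B w ↔ B.IsPos γ ∧ B.IsNeg (w γ) := by
  rw [Inv, Finset.mem_filter]
  exact ⟨fun h => h.2, fun h => ⟨h.1.1, h⟩⟩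

theorem word_nil : Word B [] 1 := ⟨by simp, by simp⟩

theorem word_cons {β : V} (hβ : β ∈ B.Δ) {ws : List V} {w : V ≃ₗᵢ[ℝ] V}
    (h : Word B ws w) : Word B (β :: ws) (sref β * w) := by
  refine ⟨?_, ?_⟩
  · intro b hb
    rcases List.mem_cons.mp hb with rfl | hb
    · exact hβ
    · exact h.1 b hb
  · rw [List.map_cons, List.prod_cons, h.2]

theorem word_append {ws1 ws2 : List V} {w1 w2 : V ≃ₗᵢ[ℝ] V}
    (h1 : Word B ws1 w1) (h2 : Word B ws2 w2) : Word B (ws1 ++ ws2) (w1 * w2) := by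
  refine ⟨?_, ?_⟩
  · intro b hb
    rcases List.mem_append.mp hb with hb | hb
    · exact h1.1 b hb
    · exact h2.1 b hb
  · rw [List.map_append, List.prod_append, h1.2, h2.2]

theorem word_inv {ws : List V} {w : V ≃ₗᵢ[ℝ] V} (h : Word B ws w) :
    Word B ws.reverse w⁻¹ := by
  refine ⟨fun b hb => h.1 b (List.mem_reverse.mp hb), ?_⟩
  rw [h.2, List.prod_inv_reverse, List.map_map, List.map_reverse]
  congr 1

theorem word_maps {ws : List V} {w : V ≃ₗᵢ[ℝ] V} (h : Word B ws w) :
    ∀ γ ∈ R.Φ, w γ ∈ R.Φ := by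
  obtain ⟨hmem, rfl⟩ := h
  induction ws with
  | nil => simp
  | cons β t ih =>
    intro γ hγ
    rw [List.map_cons, List.prod_cons]
    have h1 : (sref β * (t.map sref).prod) γ = sref β ((t.map sref).prod γ) := rfl
    rw [h1]
    exact R.reflect_mem β (B.subset (hmem β (by simp)))
      _ (ih (fun b hb => hmem b (by simp [hb])) γ hγ)

/-- the three right-multiplication lemmas -/
theorem Inv_mul_sref_of_pos {w : V ≃ₗᵢ[ℝ] V} {α : V} (hα : α ∈ B.Δ)
    (hw : ∀ γ ∈ R.Φ, w γ ∈ R.Φ) (hp : B.IsPos (w α)) :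
    Inv B (w * sref α) = insert α ((Inv B w).image (sref α)) := by
  ext γ
  rw [mem_Inv, Finset.mem_insert]
  constructor
  · rintro ⟨hγp, hγn⟩
    by_cases hc : γ = α
    · exact Or.inl hc
    · refine Or.inr ?_
      rw [Finset.mem_image]
      refine ⟨sref α γ, ?_, sref_sref' α γ⟩
      rw [mem_Inv]
      refine ⟨simple_perm hα hγp hc, ?_⟩
      have : (w * sref α) γ = w (sref α γ) := rfl
      rwa [this] at hγn
  · rintro (rfl | hγ)
    · refine ⟨isPos_simple hα, ?_⟩
      have h1 : (w * sref γ) γ = w (sref γ γ) := rfl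
      rw [h1, sref_self' (B.subset hα), map_neg]
      exact isPos_neg (hw γ (B.subset hα)) hp
    · rw [Finset.mem_image] at hγ
      obtain ⟨δ, hδ, rfl⟩ := hγ
      rw [mem_Inv] at hδ
      have hδα : δ ≠ α := by
        rintro rfl
        exact not_pos_and_neg hp hδ.2
      refine ⟨simple_perm hα hδ.1 hδα, ?_⟩
      have h1 : (w * sref α) (sref α δ) = w (sref α (sref α δ)) := rfl
      rw [h1, sref_sref' α δ]
      exact hδ.2

theorem Inv_mul_sref_of_neg {w : V ≃ₗᵢ[ℝ] V} {α : V} (hα : α ∈ B.Δ)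
    (hw : ∀ γ ∈ R.Φ, w γ ∈ R.Φ) (hn : B.IsNeg (w α)) :
    Inv B (w * sref α) = (Inv B w \ {α}).image (sref α) := by
  ext γ
  rw [mem_Inv, Finset.mem_image]
  constructor
  · rintro ⟨hγp, hγn⟩
    have hc : γ ≠ α := by
      rintro rfl
      have h1 : (w * sref γ) γ = w (sref γ γ) := rfl
      rw [h1, sref_self' (B.subset hα), map_neg] at hγn
      exact not_pos_and_neg ((isNeg_iff (hw γ (B.subset hα))).mp hn) hγn
    refine ⟨sref α γ, ?_, sref_sref' α γ⟩
    rw [Finset.mem_sdiff, mem_Inv]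
    refine ⟨⟨simple_perm hα hγp hc, ?_⟩, ?_⟩
    · have h1 : (w * sref α) γ = w (sref α γ) := rfl
      rwa [h1] at hγn
    · rw [Finset.mem_singleton]
      intro he
      have h2 := congrArg (sref α) he
      rw [sref_sref' α γ, sref_self' (B.subset hα)] at h2
      rw [h2] at hγp
      exact not_pos_and_neg hγp (isPos_neg (B.subset hα) (isPos_simple hα))
  · rintro ⟨δ, hδ, rfl⟩
    rw [Finset.mem_sdiff, mem_Inv, Finset.mem_singleton] at hδ
    obtain ⟨⟨hδp, hδn⟩, hδα⟩ := hδ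
    refine ⟨simple_perm hα hδp hδα, ?_⟩
    have h1 : (w * sref α) (sref α δ) = w (sref α (sref α δ)) := rfl
    rw [h1, sref_sref' α δ]
    exact hδn

theorem sref_conj (w : V ≃ₗᵢ[ℝ] V) (α : V) :
    sref (w α) = w * sref α * w⁻¹ := by
  ext v
  have h1 : (w * sref α * w⁻¹) v = w (sref α (w.symm v)) := rfl
  rw [h1, sref_apply', sref_apply', map_sub, map_smul, LinearIsometryEquiv.apply_symm_apply]
  rw [show (⟪v, w α⟫:ℝ) = ⟪w.symm v, α⟫ by
        rw [← LinearIsometryEquiv.inner_map_map w (w.symm v) α,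
          LinearIsometryEquiv.apply_symm_apply],
      show (⟪w α, w α⟫:ℝ) = ⟪α,α⟫ from LinearIsometryEquiv.inner_map_map w α α]

theorem sref_injective (α : V) : Function.Injective (sref α) :=
  (sref α).injective

theorem card_Inv_mul_sref_of_pos {w : V ≃ₗᵢ[ℝ] V} {α : V} (hα : α ∈ B.Δ)
    (hw : ∀ γ ∈ R.Φ, w γ ∈ R.Φ) (hp : B.IsPos (w α)) :
    (Inv B (w * sref α)).card = (Inv B w).card + 1 := by
  rw [Inv_mul_sref_of_pos hα hw hp, Finset.card_insert_of_notMem, 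
    Finset.card_image_of_injective _ (sref_injective α)]
  intro hmem
  rw [Finset.mem_image] at hmem
  obtain ⟨δ, hδ, he⟩ := hmem
  rw [mem_Inv] at hδ
  have h2 := congrArg (sref α) he
  rw [sref_sref' α δ, sref_self' (B.subset hα)] at h2
  rw [h2] at hδ
  exact not_pos_and_neg hδ.1 (isPos_neg (B.subset hα) (isPos_simple hα))

theorem mem_Inv_of_neg {w : V ≃ₗᵢ[ℝ] V} {α : V} (hα : α ∈ B.Δ)
    (hn : B.IsNeg (w α)) : α ∈ Inv B w :=
  mem_Inv.mpr ⟨isPos_simple hα, hn⟩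

theorem card_Inv_mul_sref_of_neg {w : V ≃ₗᵢ[ℝ] V} {α : V} (hα : α ∈ B.Δ)
    (hw : ∀ γ ∈ R.Φ, w γ ∈ R.Φ) (hn : B.IsNeg (w α)) :
    (Inv B w).card = (Inv B (w * sref α)).card + 1 := by
  rw [Inv_mul_sref_of_neg hα hw hn,
    Finset.card_image_of_injective _ (sref_injective α), Finset.card_sdiff_of_subset
      (Finset.singleton_subset_iff.mpr (mem_Inv_of_neg hα hn))]
  have := Finset.card_pos.mpr ⟨α, mem_Inv_of_neg hα hn⟩
  simp
  omega

theorem Inv_sref_mul_subset {w : V ≃ₗᵢ[ℝ] V} {β : V} (hβ : β ∈ B.Δ)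
    (hw : ∀ γ ∈ R.Φ, w γ ∈ R.Φ) :
    Inv B (sref β * w) ⊆ insert (w.symm β) (Inv B w) := by
  intro γ hγ
  rw [mem_Inv] at hγ
  obtain ⟨hp, hn⟩ := hγ
  have h1 : (sref β * w) γ = sref β (w γ) := rfl
  rw [h1] at hn
  rcases pos_or_neg (hw γ hp.1) with h | h
  · by_cases hc : w γ = β
    · have he : γ = w.symm β := by rw [← hc]; exact (w.symm_apply_apply γ).symm
      rw [he]
      exact Finset.mem_insert_self _ _
    · exact absurd (simple_perm hβ h hc) (fun hh => not_pos_and_neg hh hn)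
  · exact Finset.mem_insert_of_mem (mem_Inv.mpr ⟨hp, h⟩)

theorem card_Inv_le_word {ws : List V} {w : V ≃ₗᵢ[ℝ] V} (h : Word B ws w) :
    (Inv B w).card ≤ ws.length := by
  induction ws generalizing w with
  | nil =>
    have hw1 : w = 1 := by rw [h.2]; simp
    have : Inv B w = ∅ := by
      apply Finset.eq_empty_of_forall_notMem
      intro γ hγ
      rw [mem_Inv, hw1] at hγ
      exact not_pos_and_neg hγ.1 hγ.2
    simp [this]
  | cons β t ih =>
    have hβ : β ∈ B.Δ := h.1 β (by simp)
    have hword_t : Word B t ((t.map sref).prod) := ⟨fun b hb => h.1 b (by simp [hb]), rfl⟩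
    have hwe : w = sref β * (t.map sref).prod := by rw [h.2]; simp
    calc (Inv B w).card ≤ (insert (((t.map sref).prod).symm β) (Inv B ((t.map sref).prod))).card := by
          apply Finset.card_le_card
          rw [hwe]
          exact Inv_sref_mul_subset hβ (word_maps hword_t)
      _ ≤ (Inv B ((t.map sref).prod)).card + 1 := Finset.card_insert_le _ _
      _ ≤ t.length + 1 := by have := ih hword_t; omega
      _ = (β :: t).length := by simp

theorem exchange {ws : List V} {u : V ≃ₗᵢ[ℝ] V} (h : Word B ws u) {α : V}
    (hα : α ∈ B.Δ) (hneg : B.IsNeg (u α)) :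
    ∃ ws', Word B ws' (u * sref α) ∧ ws'.length + 1 = ws.length := by
  induction ws generalizing u with
  | nil =>
    exfalso
    have hu1 : u = 1 := by rw [h.2]; simp
    rw [hu1] at hneg
    exact not_pos_and_neg (isPos_simple hα) hneg
  | cons β t ih =>
    have hβ : β ∈ B.Δ := h.1 β (by simp)
    have hword_t : Word B t ((t.map sref).prod) := ⟨fun b hb => h.1 b (by simp [hb]), rfl⟩
    set u2 := (t.map sref).prod with hu2
    have hwe : u = sref β * u2 := by rw [h.2]; simp [hu2]
    have hu2α : u2 α ∈ R.Φ := word_maps hword_t α (B.subset hα)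
    rcases pos_or_neg hu2α with hp | hn
    · -- u2 α = β
      have heq : u2 α = β := by
        by_contra hc
        have := simple_perm hβ hp hc
        have h1 : u α = sref β (u2 α) := by rw [hwe]; rfl
        rw [h1] at hneg
        exact not_pos_and_neg this hneg
      have hconj : sref β = u2 * sref α * u2⁻¹ := by rw [← heq]; exact sref_conj u2 α
      have : u * sref α = u2 := by
        rw [hwe, hconj]
        group
        rw [mul_assoc, sref_mul_self, mul_one]
      exact ⟨t, by rw [this]; exact hword_t, by simp⟩
    · obtain ⟨t', ht', hlen⟩ := ih hword_t hn
      refine ⟨β :: t', ?_, by simp; omega⟩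
      have := word_cons hβ ht'
      rw [hwe, mul_assoc]
      exact this

theorem mem_lenSet_of_word {ws : List V} {w : V ≃ₗᵢ[ℝ] V} (h : Word B ws w) :
    ws.length ∈ {n | ∃ g : Fin n → V, (∀ i, g i ∈ B.Δ) ∧
      w = (List.ofFn fun i => sref (g i)).prod} := by
  refine ⟨ws.get, fun i => h.1 _ (List.get_mem ws i), ?_⟩
  rw [h.2]
  congr 1
  have e : ws.map sref = (List.ofFn ws.get).map sref := by rw [List.ofFn_get]
  rw [e, List.map_ofFn]
  rfl

theorem word_of_mem_lenSet {n : ℕ} {w : V ≃ₗᵢ[ℝ] V}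
    (h : n ∈ {n | ∃ g : Fin n → V, (∀ i, g i ∈ B.Δ) ∧
      w = (List.ofFn fun i => sref (g i)).prod}) :
    ∃ ws, Word B ws w ∧ ws.length = n := by
  obtain ⟨g, hg, hprod⟩ := h
  refine ⟨List.ofFn g, ⟨?_, ?_⟩, List.length_ofFn⟩
  · intro β hβ
    rw [List.mem_ofFn] at hβ
    obtain ⟨i, rfl⟩ := hβ
    exact hg i
  · rw [hprod, List.map_ofFn]
    rfl

theorem len_le_word {ws : List V} {w : V ≃ₗᵢ[ℝ] V} (h : Word B ws w) :
    B.len w ≤ ws.length :=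
  Nat.sInf_le (mem_lenSet_of_word h)

theorem exists_reduced_word {w : V ≃ₗᵢ[ℝ] V} (h : ∃ ws, Word B ws w) :
    ∃ ws, Word B ws w ∧ ws.length = B.len w := by
  obtain ⟨ws, hws⟩ := h
  exact word_of_mem_lenSet (Nat.sInf_mem ⟨ws.length, mem_lenSet_of_word hws⟩)

theorem word_single {α : V} (hα : α ∈ B.Δ) : Word B [α] (sref α) := by
  refine ⟨by simp [hα], by simp⟩

theorem len_le_card_Inv : ∀ (n : ℕ) (w : V ≃ₗᵢ[ℝ] V), (Inv B w).card = n →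
    (∃ ws, Word B ws w) → B.len w ≤ n := by
  intro n
  induction n using Nat.strong_induction_on with
  | _ n ih =>
  intro w hcard hex
  by_cases hc : ∃ α ∈ B.Δ, B.IsNeg (w α)
  · obtain ⟨α, hα, hneg⟩ := hc
    obtain ⟨ws, hws⟩ := hex
    have hw := word_maps hws
    have hcard2 : (Inv B w).card = (Inv B (w * sref α)).card + 1 :=
      card_Inv_mul_sref_of_neg hα hw hneg
    have hex2 : ∃ ws', Word B ws' (w * sref α) :=
      ⟨ws ++ [α], word_append hws (word_single hα)⟩
    have hlt : (Inv B (w * sref α)).card < n := by omega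
    have h2 := ih _ hlt (w * sref α) rfl hex2
    obtain ⟨ws', hws', hlen'⟩ := exists_reduced_word hex2
    have hw2 : Word B (ws' ++ [α]) w := by
      have := word_append hws' (word_single hα)
      rwa [mul_assoc, sref_mul_self, mul_one] at this
    have := len_le_word hw2
    simp at this
    omega
  · push_neg at hc
    obtain ⟨ws, hws, hlen⟩ := exists_reduced_word hex
    by_cases h0 : B.len w = 0
    · omega
    · exfalso
      have hne : ws ≠ [] := by
        intro h
        rw [h] at hlen
        simp at hlen
        omega
      obtain ⟨t, α, rfl⟩ : ∃ t α, ws = t ++ [α] := by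
        rcases List.eq_nil_or_concat ws with h | ⟨t, b, h⟩
        · exact absurd h hne
        · exact ⟨t, b, by rw [h]; simp⟩
      have hα : α ∈ B.Δ := hws.1 α (by simp)
      have hword_t : Word B t ((t.map sref).prod) := ⟨fun b hb => hws.1 b (by simp [hb]), rfl⟩
      set u := (t.map sref).prod with hu
      have hwu : w = u * sref α := by rw [hws.2]; simp [hu]
      have h1 : w α = -(u α) := by
        rw [hwu]
        have h2 : (u * sref α) α = u (sref α α) := rfl
        rw [h2, sref_self' (B.subset hα), map_neg]
      have huα : u α ∈ R.Φ := word_maps hword_t α (B.subset hα)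
      have hun : B.IsNeg (u α) := by
        rcases pos_or_neg huα with hpp | hnn
        · exact absurd (h1 ▸ isPos_neg huα hpp) (hc α hα)
        · exact hnn
      obtain ⟨t', ht', hlen'⟩ := exchange hword_t hα hun
      rw [← hwu] at ht'
      have hle := len_le_word ht'
      simp at hlen
      omega

theorem len_eq_card_Inv {w : V ≃ₗᵢ[ℝ] V} (hex : ∃ ws, Word B ws w) :
    B.len w = (Inv B w).card := by
  refine le_antisymm (len_le_card_Inv _ w rfl hex) ?_
  obtain ⟨ws, hws, hlen⟩ := exists_reduced_word hex
  have := card_Inv_le_word hws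
  omega

theorem sref_neg_eq (α : V) : sref (-α) = sref α := by
  rw [sref, sref]
  congr 2
  simpa using Submodule.span_singleton_group_smul_eq ℝ (-1 : ℝˣ) α

theorem ht_pos_ge_one {γ : V} (hγ : B.IsPos γ) : 1 ≤ B.ht γ := by
  have hex : ∃ α ∈ B.Δ, 1 ≤ B.coeff γ α := by
    by_contra hc
    push_neg at hc
    apply root_ne_zero hγ.1
    rw [B.coeff_spec γ hγ.1]
    apply Finset.sum_eq_zero
    intro α hα
    have h1 := hγ.2 α hα
    have h2 := hc α hα
    have : B.coeff γ α = 0 := by omega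
    rw [this]; simp
  obtain ⟨α, hα, h1⟩ := hex
  calc (1:ℤ) ≤ B.coeff γ α := h1
    _ ≤ ∑ β ∈ B.Δ, B.coeff γ β := Finset.single_le_sum (fun β hβ => hγ.2 β hβ) hα

theorem descent_step {γ : V} (hγ : B.IsPos γ) (hΔ : γ ∉ B.Δ) :
    ∃ α ∈ B.Δ, ∃ n : ℤ, 1 ≤ n ∧ B.IsPos (sref α γ) ∧
      B.ht (sref α γ) = B.ht γ - n := by
  have hex : ∃ α ∈ B.Δ, (0:ℝ) < ⟪γ, α⟫ := by
    by_contra hc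
    push_neg at hc
    have h1 : (0:ℝ) < ⟪γ, γ⟫ := inner_self_pos' hγ.1
    have h2 : ⟪γ, γ⟫ = ∑ α ∈ B.Δ, (B.coeff γ α : ℝ) * ⟪γ, α⟫ := by
      conv_lhs => rw [show (⟪γ,γ⟫:ℝ) = ⟪γ, ∑ α ∈ B.Δ, (B.coeff γ α : ℝ) • α⟫ by
        rw [← B.coeff_spec γ hγ.1]]
      rw [inner_sum]
      apply Finset.sum_congr rfl
      intro α hα
      rw [real_inner_smul_right]
    have h3 : ∑ α ∈ B.Δ, (B.coeff γ α : ℝ) * ⟪γ, α⟫ ≤ 0 := by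
      apply Finset.sum_nonpos
      intro α hα
      apply mul_nonpos_of_nonneg_of_nonpos
      · exact_mod_cast hγ.2 α hα
      · exact hc α hα
    linarith
  obtain ⟨α, hα, hinner⟩ := hex
  obtain ⟨n, hn, hs⟩ := pairing_exists hγ.1 (B.subset hα)
  have hn1 : 1 ≤ n := by
    have h1 : (0:ℝ) < (n:ℝ) * ⟪α,α⟫ := by rw [← hn]; linarith
    have h2 : (0:ℝ) < ⟪α,α⟫ := inner_self_pos' (B.subset hα)
    have h3 : (0:ℝ) < (n:ℝ) := by
      by_contra hc
      push_neg at hc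
      have := mul_nonpos_of_nonpos_of_nonneg hc (le_of_lt h2)
      linarith
    have : 0 < n := by exact_mod_cast h3
    omega
  have hne : γ ≠ α := fun h => hΔ (h ▸ hα)
  have hpos := simple_perm hα hγ hne
  refine ⟨α, hα, n, hn1, hpos, ?_⟩
  have hco := coeff_sref_simple hα hγ.1 hs
  rw [ht, ht]
  rw [Finset.sum_congr rfl (fun β hβ => hco β hβ)]
  rw [Finset.sum_sub_distrib, Finset.sum_ite_eq' B.Δ α (fun _ => n), if_pos hα]

theorem sref_word_of_pos : ∀ (k : ℕ), ∀ {γ : V}, B.IsPos γ → (B.ht γ).toNat = k →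
    ∃ ws, Word B ws (sref γ) := by
  intro k
  induction k using Nat.strong_induction_on with
  | _ k ih =>
  intro γ hγ hk
  by_cases hΔ : γ ∈ B.Δ
  · exact ⟨[γ], word_single hΔ⟩
  · obtain ⟨α, hα, n, hn1, hpos, hht⟩ := descent_step hγ hΔ
    have h1 := ht_pos_ge_one hγ
    have h2 := ht_pos_ge_one hpos
    have hlt : (B.ht (sref α γ)).toNat < k := by omega
    obtain ⟨ws', hws'⟩ := ih _ hlt hpos rfl
    have hconj : sref γ = sref α * sref (sref α γ) * sref α := by
      have h4 := sref_conj (sref α) (sref α γ)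
      rw [sref_sref'] at h4
      rwa [sref_inv] at h4
    refine ⟨α :: (ws' ++ [α]), ?_⟩
    rw [hconj]
    have h5 := word_append (word_cons hα hws') (word_single hα)
    exact h5

theorem sref_word {γ : V} (hγ : γ ∈ R.Φ) : ∃ ws, Word B ws (sref γ) := by
  rcases pos_or_neg (B := B) hγ with h | h
  · exact sref_word_of_pos _ h rfl
  · have h2 : B.IsPos (-γ) := (isNeg_iff hγ).mp h
    obtain ⟨ws, hws⟩ := sref_word_of_pos _ h2 rfl
    rw [sref_neg_eq] at hws
    exact ⟨ws, hws⟩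

theorem weyl_word {w : V ≃ₗᵢ[ℝ] V} (hw : w ∈ R.Weyl) : ∃ ws, Word B ws w := by
  induction hw using Subgroup.closure_induction with
  | mem x hx =>
    obtain ⟨γ, hγ, rfl⟩ := hx
    exact sref_word hγ
  | one => exact ⟨[], word_nil⟩
  | mul x y hx hy ihx ihy =>
    obtain ⟨ws1, h1⟩ := ihx
    obtain ⟨ws2, h2⟩ := ihy
    exact ⟨ws1 ++ ws2, word_append h1 h2⟩
  | inv x hx ihx =>
    obtain ⟨ws, h⟩ := ihx
    exact ⟨ws.reverse, word_inv h⟩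

theorem coeff_sref_root {γ δ : V} (hγ : γ ∈ R.Φ) (hδ : δ ∈ R.Φ) {n : ℤ}
    (hs : sref δ γ = γ - (n:ℝ) • δ) :
    ∀ β ∈ B.Δ, B.coeff (sref δ γ) β = B.coeff γ β - n * B.coeff δ β := by
  have hmem : sref δ γ ∈ R.Φ := R.reflect_mem δ hδ γ hγ
  have h : sref δ γ = ∑ β ∈ B.Δ, ((B.coeff γ β : ℝ) - (n:ℝ) * (B.coeff δ β : ℝ)) • β := by
    simp only [sub_smul, Finset.sum_sub_distrib, mul_smul]
    rw [← Finset.smul_sum, ← B.coeff_spec γ hγ, ← B.coeff_spec δ hδ, hs]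
  intro β hβ
  have h3 := coeff_unique hmem h β hβ
  have h4 : ((B.coeff (sref δ γ) β : ℤ) : ℝ)
      = ((B.coeff γ β - n * B.coeff δ β : ℤ) : ℝ) := by
    rw [← h3]
    push_cast
    ring
  exact_mod_cast h4

theorem exists_coeff_pos {γ : V} (hγ : B.IsPos γ) : ∃ β ∈ B.Δ, 1 ≤ B.coeff γ β := by
  by_contra hc
  push_neg at hc
  apply root_ne_zero hγ.1
  rw [B.coeff_spec γ hγ.1]
  apply Finset.sum_eq_zero
  intro α hα
  have h1 := hγ.2 α hα
  have h2 := hc α hα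
  have : B.coeff γ α = 0 := by omega
  rw [this]; simp

section Highest
variable {h : V} (hh : B.IsHighest h)
include hh

theorem coeff_h_ge_one : ∀ α ∈ B.Δ, 1 ≤ B.coeff h α := by
  intro α hα
  have h1 := hh.2 α (B.subset hα) α hα
  rw [coeff_simple hα α hα, if_pos rfl] at h1
  exact h1

theorem isPos_h : B.IsPos h :=
  ⟨hh.1, fun α hα => by have := coeff_h_ge_one hh α hα; omega⟩

/-- the pairing of a positive root with the highest root is nonnegative -/
theorem pairing_h_nonneg {γ : V} (hγ : B.IsPos γ) :
    ∃ n : ℤ, 0 ≤ n ∧ 2 * ⟪γ, h⟫ = n * ⟪h, h⟫ ∧ sref h γ = γ - (n:ℝ) • h := by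
  obtain ⟨n, hn, hs⟩ := pairing_exists hγ.1 hh.1
  refine ⟨n, ?_, hn, hs⟩
  by_contra hc
  push_neg at hc
  have hco := coeff_sref_root (B := B) hγ.1 hh.1 hs
  obtain ⟨β, hβ, h1⟩ := exists_coeff_pos hγ
  have h2 := hh.2 (sref h γ) (R.reflect_mem h hh.1 γ hγ.1) β hβ
  have h3 := hco β hβ
  have h4 := coeff_h_ge_one hh β hβ
  have h5 : (1:ℤ) ≤ -n := by omega
  have h6 : (1:ℤ) * B.coeff h β ≤ (-n) * B.coeff h β :=
    mul_le_mul_of_nonneg_right h5 (by omega)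
  have h7 : B.coeff γ β - n * B.coeff h β = B.coeff γ β + (-n) * B.coeff h β := by ring
  omega

theorem sref_h_neg {γ : V} (hγ : B.IsPos γ) {n : ℤ} (hn1 : 1 ≤ n)
    (hs : sref h γ = γ - (n:ℝ) • h) : B.IsNeg (sref h γ) := by
  have hco := coeff_sref_root (B := B) hγ.1 hh.1 hs
  refine ⟨R.reflect_mem h hh.1 γ hγ.1, fun β hβ => ?_⟩
  have h1 := hco β hβ
  have h2 := hh.2 γ hγ.1 β hβ
  have h3 := coeff_h_ge_one hh β hβ
  have h6 : (1:ℤ) * B.coeff h β ≤ n * B.coeff h β :=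
    mul_le_mul_of_nonneg_right hn1 (by omega)
  omega

theorem mem_span_Itil {γ : V} (hγ : B.IsPos γ) (hinner : ⟪γ, h⟫ = 0) :
    γ ∈ Submodule.span ℝ ((B.Itil h : Finset V) : Set V) := by
  have hterm : ∀ α ∈ B.Δ, 0 ≤ (B.coeff γ α : ℝ) * ⟪h, α⟫ := by
    intro α hα
    apply mul_nonneg
    · exact_mod_cast hγ.2 α hα
    · obtain ⟨m, hm0, hm, _⟩ := pairing_h_nonneg hh (isPos_simple hα)
      have hhh := inner_self_pos' hh.1
      have : (0:ℝ) ≤ (m:ℝ) := by exact_mod_cast hm0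
      rw [real_inner_comm]
      nlinarith
  have hsum : ∑ α ∈ B.Δ, (B.coeff γ α : ℝ) * ⟪h, α⟫ = 0 := by
    have e : ⟪h, γ⟫ = ∑ α ∈ B.Δ, (B.coeff γ α : ℝ) * ⟪h, α⟫ := by
      conv_lhs => rw [show (⟪h,γ⟫:ℝ) = ⟪h, ∑ α ∈ B.Δ, (B.coeff γ α : ℝ) • α⟫ by
        rw [← B.coeff_spec γ hγ.1]]
      rw [inner_sum]
      apply Finset.sum_congr rfl
      intro α hα
      rw [real_inner_smul_right]
    rw [← e, real_inner_comm, hinner]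
  have hzero : ∀ α ∈ B.Δ, (B.coeff γ α : ℝ) * ⟪h, α⟫ = 0 :=
    (Finset.sum_eq_zero_iff_of_nonneg hterm).mp hsum
  have e2 : ∑ α ∈ B.Δ.filter (fun α => ¬(⟪h, α⟫ = 0)), (B.coeff γ α : ℝ) • α = 0 := by
    apply Finset.sum_eq_zero
    intro α hα
    rw [Finset.mem_filter] at hα
    have := hzero α hα.1
    have hc : (B.coeff γ α : ℝ) = 0 := by
      rcases mul_eq_zero.mp this with hc | hc
      · exact hc
      · exact absurd hc hα.2
    rw [hc, zero_smul]
  have hγeq : γ = ∑ α ∈ B.Δ.filter (fun α => ⟪h, α⟫ = 0), (B.coeff γ α : ℝ) • α := by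
    conv_lhs => rw [B.coeff_spec γ hγ.1]
    rw [← Finset.sum_filter_add_sum_filter_not B.Δ (fun α => ⟪h, α⟫ = 0)
      (fun α => (B.coeff γ α : ℝ) • α), e2, add_zero]
  rw [hγeq]
  apply Submodule.sum_mem
  intro α hα
  exact Submodule.smul_mem _ _ (Submodule.subset_span (by simpa [Itil] using hα))

end Highest

section Main
variable {h : V} (hh : B.IsHighest h) {x : V ≃ₗᵢ[ℝ] V} (hx : x ∈ B.XI (B.Itil h))
include hh hx

theorem Inv_x_subset : Inv B x ⊆ Inv B (sref h) := by
  intro γ hγ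
  rw [mem_Inv] at hγ
  obtain ⟨hγp, hγn⟩ := hγ
  obtain ⟨n, hn0, hn, hs⟩ := pairing_h_nonneg hh hγp
  rcases eq_or_lt_of_le hn0 with he | hlt
  · exfalso
    have hinner : ⟪γ, h⟫ = 0 := by
      have : ((n:ℤ):ℝ) = 0 := by rw [← he]; simp
      rw [this, zero_mul] at hn
      linarith
    have := hx.2 γ hγp.1 (mem_span_Itil hh hγp hinner) hγp
    exact not_pos_and_neg this hγn
  · exact mem_Inv.mpr ⟨hγp, sref_h_neg hh hγp hlt hs⟩

theorem Inv_xs_subset : Inv B (x * sref h) ⊆ Inv B (sref h) := by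
  intro γ hγ
  rw [mem_Inv] at hγ
  obtain ⟨hγp, hγn⟩ := hγ
  obtain ⟨n, hn0, hn, hs⟩ := pairing_h_nonneg hh hγp
  rcases eq_or_lt_of_le hn0 with he | hlt
  · exfalso
    have hsγ : sref h γ = γ := by
      rw [hs, show ((n:ℤ):ℝ) = 0 by rw [← he]; simp, zero_smul, sub_zero]
    have hinner : ⟪γ, h⟫ = 0 := by
      have : ((n:ℤ):ℝ) = 0 := by rw [← he]; simp
      rw [this, zero_mul] at hn
      linarith
    have h1 : (x * sref h) γ = x (sref h γ) := rfl
    rw [h1, hsγ] at hγn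
    have := hx.2 γ hγp.1 (mem_span_Itil hh hγp hinner) hγp
    exact not_pos_and_neg this hγn
  · exact mem_Inv.mpr ⟨hγp, sref_h_neg hh hγp hlt hs⟩

/-- the element of `Inv s` paired with `γ` -/
theorem sigma_facts {γ : V} (hγ : γ ∈ Inv B (sref h)) :
    -(sref h γ) ∈ Inv B (sref h) ∧ sref h (-(sref h γ)) = -γ := by
  rw [mem_Inv] at hγ
  obtain ⟨hγp, hγn⟩ := hγ
  obtain ⟨n, hn0, hn, hs⟩ := pairing_h_nonneg hh hγp
  have hn1 : 1 ≤ n := by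
    rcases eq_or_lt_of_le hn0 with he | hlt
    · exfalso
      have hsγ : sref h γ = γ := by
        rw [hs, show ((n:ℤ):ℝ) = 0 by rw [← he]; simp, zero_smul, sub_zero]
      rw [hsγ] at hγn
      exact not_pos_and_neg hγp hγn
    · omega
  have hδΦ : -(sref h γ) ∈ R.Φ := neg_root_mem (R.reflect_mem h hh.1 γ hγp.1)
  have hδpos : B.IsPos (-(sref h γ)) := (isNeg_iff (R.reflect_mem h hh.1 γ hγp.1)).mp hγn
  have hδe : -(sref h γ) = (n:ℝ) • h - γ := by rw [hs]; module
  have hsδ : sref h (-(sref h γ)) = -γ := by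
    rw [map_neg, sref_sref']
  refine ⟨mem_Inv.mpr ⟨hδpos, ?_⟩, hsδ⟩
  rw [hsδ]
  exact isPos_neg hγp.1 hγp

theorem Inv_xs_eq : Inv B (x * sref h)
    = (Inv B (sref h) \ Inv B x).image (fun γ => -(sref h γ)) := by
  have hxmaps : ∀ γ ∈ R.Φ, x γ ∈ R.Φ := by
    obtain ⟨ws, hws⟩ := weyl_word (B := B) hx.1
    exact word_maps hws
  ext γ
  rw [Finset.mem_image]
  constructor
  · intro hγ
    have hγs : γ ∈ Inv B (sref h) := Inv_xs_subset hh hx hγ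
    obtain ⟨hδs, hδe⟩ := sigma_facts hh hx hγs
    refine ⟨-(sref h γ), ?_, ?_⟩
    · rw [Finset.mem_sdiff]
      refine ⟨hδs, ?_⟩
      intro hmem
      rw [mem_Inv] at hmem hγ
      have h1 : x (-(sref h γ)) = -((x * sref h) γ) := by
        rw [map_neg]; rfl
      have h2 : B.IsPos (-((x * sref h) γ)) := by
        rw [← isNeg_iff]
        · exact hγ.2
        · exact hxmaps _ (R.reflect_mem h hh.1 γ hγ.1.1)
      rw [h1] at hmem
      exact not_pos_and_neg h2 hmem.2
    · rw [hδe]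
      exact neg_neg γ
  · rintro ⟨δ, hδ, rfl⟩
    rw [Finset.mem_sdiff] at hδ
    obtain ⟨hδs, hδnx⟩ := hδ
    obtain ⟨hγs', hsδ⟩ := sigma_facts hh hx hδs
    rw [mem_Inv] at hδs hγs' ⊢
    refine ⟨hγs'.1, ?_⟩
    have h1 : (x * sref h) (-(sref h δ)) = x (sref h (-(sref h δ))) := rfl
    rw [h1, hsδ, map_neg]
    apply isPos_neg (hxmaps δ hδs.1.1)
    rcases pos_or_neg (hxmaps δ hδs.1.1) with hp | hn
    · exact hp
    · exact absurd (mem_Inv.mpr ⟨hδs.1, hn⟩) hδnx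

end Main


end Base
end Aux

open Base

/-- for every positive long root `α`, one has
`l(x_α s_{α̃}) = l(s_{α̃}) − l(x_α)`, where `x_α` is the unique element of `X_Ĩ`
with `x_α(α̃) = α`. -/
theorem len_xa_mul_sref_highest (R : NRootSystem V) (B : Base R) {h : V}
    (hh : B.IsHighest h) {α : V} (hα : R.IsLong α) (hαpos : B.IsPos α)
    {x : V ≃ₗᵢ[ℝ] V} (hx : x ∈ B.XI (B.Itil h)) (hxα : x h = α) :
    (B.len (x * sref h) : ℤ) = (B.len (sref h) : ℤ) - B.len x := by

  have hexx : ∃ ws, Word B ws x := weyl_word hx.1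
  have hexs : ∃ ws, Word B ws (sref h) := sref_word hh.1
  have hexxs : ∃ ws, Word B ws (x * sref h) := by
    obtain ⟨a, ha⟩ := hexx
    obtain ⟨b, hb⟩ := hexs
    exact ⟨a ++ b, word_append ha hb⟩
  have hinj : Function.Injective (fun γ : V => -(sref h γ)) := by
    intro a b hab
    simp only at hab
    exact (sref h).injective (neg_injective hab)
  have hle := Finset.card_le_card (Inv_x_subset hh hx)
  rw [len_eq_card_Inv hexx, len_eq_card_Inv hexs, len_eq_card_Inv hexxs,
    Inv_xs_eq hh hx, Finset.card_image_of_injective _ hinj,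
    Finset.card_sdiff_of_subset (Inv_x_subset hh hx)]
  push_cast
  omega
end
end

section
/- For every positive long root α ∈ Φ_lg ∩ Φ⁺, one has x_{−α} = s_α x_α, and the lengths add: l(x_{−α}) = l(s_α x_α) = l(s_α) + l(x_α). -/
open scoped RealInnerProductSpace Classical

noncomputable section

variable {V : Type} [NormedAddCommGroup V] [InnerProductSpace ℝ V] [FiniteDimensional ℝ V]

set_option linter.unusedSectionVars false

section Aux


theorem sref_apply (α β : V) : sref α β = β - (2 * ⟪α, β⟫ / ⟪α, α⟫) • α := by
  rw [sref, Submodule.reflection_orthogonal_apply, Submodule.reflection_singleton_apply]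
  rw [real_inner_self_eq_norm_sq]
  simp only [RCLike.ofReal_real_eq_id, id_eq]
  match_scalars <;> ring

theorem sref_self (α : V) : sref α α = -α :=
  Submodule.reflection_orthogonalComplement_singleton_eq_neg α

theorem sref_of_inner_eq_zero {α β : V} (h : ⟪α, β⟫ = 0) : sref α β = β := by
  rw [sref_apply, h]; simp

theorem sref_mul_self (α : V) : sref α * sref α = 1 := by
  ext v
  rw [LinearIsometryEquiv.coe_mul, LinearIsometryEquiv.coe_one, Function.comp_apply, id]
  exact Submodule.reflection_reflection _ v

theorem sref_inv (α : V) : (sref α)⁻¹ = sref α := by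
  rw [eq_comm, eq_inv_iff_mul_eq_one, sref_mul_self]

theorem inner_isom (w : V ≃ₗᵢ[ℝ] V) (x y : V) : ⟪w x, w y⟫ = ⟪x, y⟫ :=
  w.inner_map_map x y

theorem sref_conj (w : V ≃ₗᵢ[ℝ] V) (α : V) : sref (w α) = w * sref α * w⁻¹ := by
  ext v
  show sref (w α) v = w (sref α (w⁻¹ v))
  rw [sref_apply, sref_apply, map_sub, map_smul]
  have h1 : ⟪α, w⁻¹ v⟫ = ⟪w α, v⟫ := by
    rw [← inner_isom w α (w⁻¹ v)]
    congr 1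
    exact w.apply_symm_apply v
  have h2 : ⟪w α, w α⟫ = ⟪α, α⟫ := inner_isom w α α
  rw [h1, h2]
  congr 1
  exact (w.apply_symm_apply v).symm

theorem sref_neg (α : V) : sref (-α) = sref α := by
  ext v
  rw [sref_apply, sref_apply]
  rw [inner_neg_left, inner_neg_neg]
  rw [smul_neg]
  congr 1
  rw [← neg_smul]
  congr 1
  ring

theorem sref_sref (α x : V) : sref α (sref α x) = x := Submodule.reflection_reflection _ x

end Aux

section RootLemmas
variable {R : NRootSystem V}

theorem root_ne_zero {γ : V} (hγ : γ ∈ R.Φ) : γ ≠ 0 := fun h => R.zero_not_mem (h ▸ hγ)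

theorem root_inner_self_pos {γ : V} (hγ : γ ∈ R.Φ) : 0 < ⟪γ, γ⟫ :=
  lt_of_lt_of_le one_pos (R.norm_one_le γ hγ)

theorem neg_root_mem {γ : V} (hγ : γ ∈ R.Φ) : -γ ∈ R.Φ := by
  have := R.reflect_mem γ hγ γ hγ
  rwa [sref_self] at this

/-- the integer `⟨β, α∨⟩` and the reflection formula -/
theorem exists_pairing {α β : V} (hα : α ∈ R.Φ) (hβ : β ∈ R.Φ) :
    ∃ n : ℤ, 2 * ⟪α, β⟫ / ⟪α, α⟫ = (n : ℝ) ∧ sref α β = β - (n : ℝ) • α := by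
  obtain ⟨n, hn⟩ := R.pairing_int α hα β hβ
  have h0 : ⟪α, α⟫ ≠ 0 := ne_of_gt (root_inner_self_pos hα)
  refine ⟨n, ?_, ?_⟩
  · rw [real_inner_comm α β] at hn
    rw [hn, mul_div_assoc, div_self h0, mul_one]
  · rw [real_inner_comm α β] at hn
    rw [sref_apply, hn, mul_div_assoc, div_self h0, mul_one]

theorem sref_root_mem {α γ : V} (hα : α ∈ R.Φ) (hγ : γ ∈ R.Φ) : sref α γ ∈ R.Φ :=
  R.reflect_mem α hα γ hγ

theorem sref_mem_weyl {α : V} (hα : α ∈ R.Φ) : sref α ∈ R.Weyl :=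
  Subgroup.subset_closure ⟨α, hα, rfl⟩

theorem weyl_maps_roots {w : V ≃ₗᵢ[ℝ] V} (hw : w ∈ R.Weyl) {γ : V} (hγ : γ ∈ R.Φ) :
    w γ ∈ R.Φ := by
  revert γ
  induction hw using Subgroup.closure_induction'' with
  | one => intro γ hγ; exact hγ
  | mem u hu => rintro γ hγ; obtain ⟨α, hα, rfl⟩ := hu; exact sref_root_mem hα hγ
  | inv_mem u hu =>
      rintro γ hγ
      obtain ⟨α, hα, rfl⟩ := hu
      rw [sref_inv]
      exact sref_root_mem hα hγ
  | mul u v _ _ hu hv => intro γ hγ; exact hu (hv hγ)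

end RootLemmas
section BaseLemmas
variable {R : NRootSystem V} {B : Base R}

theorem coeff_eq {γ : V} (hγ : γ ∈ R.Φ) (f : V → ℝ) (h : γ = ∑ a ∈ B.Δ, f a • a) :
    ∀ a ∈ B.Δ, f a = (B.coeff γ a : ℝ) := by
  have hspec := B.coeff_spec γ hγ
  have hz : ∑ a ∈ B.Δ, (f a - (B.coeff γ a : ℝ)) • a = 0 := by
    simp only [sub_smul, Finset.sum_sub_distrib, ← h, ← hspec, sub_self]
  have hz' : ∑ a ∈ B.Δ.attach, (f a.1 - (B.coeff γ a.1 : ℝ)) • (a.1 : V) = 0 := by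
    rw [Finset.sum_attach B.Δ (fun a => (f a - (B.coeff γ a : ℝ)) • a)]
    exact hz
  intro a ha
  have := linearIndependent_iff'.mp B.indep B.Δ.attach
    (fun a => f a.1 - (B.coeff γ a.1 : ℝ)) hz' ⟨a, ha⟩ (Finset.mem_attach _ _)
  have h2 : f a - (B.coeff γ a : ℝ) = 0 := this
  linarith

theorem coeff_eq_int {γ : V} (hγ : γ ∈ R.Φ) (g : V → ℤ) (h : γ = ∑ a ∈ B.Δ, (g a : ℝ) • a) :
    ∀ a ∈ B.Δ, g a = B.coeff γ a := by
  intro a ha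
  exact_mod_cast coeff_eq (B := B) hγ (fun a => (g a : ℝ)) h a ha

theorem eq_zero_of_coeff_eq_zero {γ : V} (hγ : γ ∈ R.Φ)
    (h : ∀ a ∈ B.Δ, B.coeff γ a = 0) : False := by
  have := B.coeff_spec γ hγ
  have : γ = 0 := by
    rw [this]
    apply Finset.sum_eq_zero
    intro a ha
    rw [h a ha]
    simp
  exact root_ne_zero hγ this

theorem pos_or_neg {γ : V} (hγ : γ ∈ R.Φ) : B.IsPos γ ∨ B.IsNeg γ := by
  rcases B.coeff_sign γ hγ with h | h
  · exact Or.inl ⟨hγ, h⟩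
  · exact Or.inr ⟨hγ, h⟩

theorem not_pos_and_neg {γ : V} (hp : B.IsPos γ) (hn : B.IsNeg γ) : False :=
  eq_zero_of_coeff_eq_zero hp.1 fun a ha => le_antisymm (hn.2 a ha) (hp.2 a ha)

theorem coeff_neg {γ : V} (hγ : γ ∈ R.Φ) (a : V) (ha : a ∈ B.Δ) :
    B.coeff (-γ) a = -B.coeff γ a := by
  have : -γ = ∑ b ∈ B.Δ, ((-B.coeff γ b : ℤ) : ℝ) • b := by
    push_cast
    simp only [neg_smul]
    rw [Finset.sum_neg_distrib, ← B.coeff_spec γ hγ]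
  exact (coeff_eq_int (neg_root_mem hγ) _ this a ha).symm

theorem isNeg_neg_of_isPos {γ : V} (hγ : γ ∈ R.Φ) (hp : B.IsPos γ) : B.IsNeg (-γ) := by
  refine ⟨neg_root_mem hγ, fun a ha => ?_⟩
  rw [coeff_neg hγ a ha]
  simpa using hp.2 a ha

theorem isPos_neg_of_isNeg {γ : V} (hγ : γ ∈ R.Φ) (hn : B.IsNeg γ) : B.IsPos (-γ) := by
  refine ⟨neg_root_mem hγ, fun a ha => ?_⟩
  rw [coeff_neg hγ a ha]
  simpa using hn.2 a ha

theorem coeff_sub_smul {γ γ' α : V} (hγ : γ ∈ R.Φ) (hγ' : γ' ∈ R.Φ) (hα : α ∈ R.Φ)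
    (m : ℤ) (h : γ' = γ - (m : ℝ) • α) (a : V) (ha : a ∈ B.Δ) :
    B.coeff γ' a = B.coeff γ a - m * B.coeff α a := by
  have : γ' = ∑ b ∈ B.Δ, ((B.coeff γ b - m * B.coeff α b : ℤ) : ℝ) • b := by
    push_cast
    simp only [sub_smul, Finset.sum_sub_distrib, mul_smul]
    rw [← B.coeff_spec γ hγ, ← Finset.smul_sum, ← B.coeff_spec α hα, h]
  exact (coeff_eq_int hγ' _ this a ha).symm

theorem coeff_simple {a : V} (ha : a ∈ B.Δ) (b : V) (hb : b ∈ B.Δ) :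
    B.coeff a b = if b = a then 1 else 0 := by
  have : a = ∑ c ∈ B.Δ, (((if c = a then 1 else 0 : ℤ)) : ℝ) • c := by
    push_cast
    simp [ite_smul, Finset.sum_ite_eq' B.Δ a (fun c => c), ha]
  exact (coeff_eq_int (B.subset ha) _ this b hb).symm

theorem simple_isPos {a : V} (ha : a ∈ B.Δ) : B.IsPos a := by
  refine ⟨B.subset ha, fun b hb => ?_⟩
  rw [coeff_simple ha b hb]
  split <;> simp

end BaseLemmas
section PosLemmas
variable {R : NRootSystem V} {B : Base R}

theorem exists_pos_coeff_ne {a γ : V} (ha : a ∈ B.Δ) (hγ : B.IsPos γ) (hne : γ ≠ a) :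
    ∃ b ∈ B.Δ, b ≠ a ∧ 0 < B.coeff γ b := by
  by_contra hcon
  push_neg at hcon
  have hzero : ∀ b ∈ B.Δ, b ≠ a → B.coeff γ b = 0 := fun b hb hb' =>
    le_antisymm (hcon b hb hb') (hγ.2 b hb)
  have hγa : γ = (B.coeff γ a : ℝ) • a := by
    have hs := B.coeff_spec γ hγ.1
    rw [Finset.sum_eq_single_of_mem a ha (fun b hb hb' => by rw [hzero b hb hb']; simp)] at hs
    exact hs
  have := R.reduced a (B.subset ha) (B.coeff γ a : ℝ) (by rw [← hγa]; exact hγ.1)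
  rcases this with h1 | h1
  · apply hne
    rw [hγa, h1, one_smul]
  · have : B.coeff γ a = -1 := by exact_mod_cast h1
    have := hγ.2 a ha
    omega

/-- a simple reflection permutes the positive roots other than the simple root itself -/
theorem sref_simple_isPos {a γ : V} (ha : a ∈ B.Δ) (hγ : B.IsPos γ) (hne : γ ≠ a) :
    B.IsPos (sref a γ) := by
  obtain ⟨n, _, hform⟩ := exists_pairing (B.subset ha) hγ.1
  have hmem : sref a γ ∈ R.Φ := sref_root_mem (B.subset ha) hγ.1
  obtain ⟨b, hb, hba, hbpos⟩ := exists_pos_coeff_ne ha hγ hne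
  have hcoeff := coeff_sub_smul (B := B) hγ.1 hmem (B.subset ha) n hform b hb
  rw [coeff_simple ha b hb, if_neg hba, mul_zero, sub_zero] at hcoeff
  rcases pos_or_neg (B := B) hmem with h | h
  · exact h
  · exfalso
    have := h.2 b hb
    omega

/-- if a reflection in a positive root sends a positive root to a negative root,
the two roots have positive inner product -/
theorem inner_pos_of_sref_neg {α δ : V} (hα : B.IsPos α) (hδ : B.IsPos δ)
    (hneg : B.IsNeg (sref α δ)) : 0 < ⟪δ, α⟫ := by
  by_contra hcon
  push_neg at hcon
  obtain ⟨n, hdiv, hform⟩ := exists_pairing hα.1 hδ.1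
  have hmem : sref α δ ∈ R.Φ := sref_root_mem hα.1 hδ.1
  have hn : (n : ℝ) ≤ 0 := by
    rw [← hdiv]
    apply div_nonpos_of_nonpos_of_nonneg
    · rw [real_inner_comm]; linarith
    · exact le_of_lt (root_inner_self_pos hα.1)
  have hn' : n ≤ 0 := by exact_mod_cast hn
  apply eq_zero_of_coeff_eq_zero (B := B) hmem
  intro b hb
  have hcoeff := coeff_sub_smul (B := B) hδ.1 hmem hα.1 n hform b hb
  have h1 := hδ.2 b hb
  have h2 := hα.2 b hb
  have h3 := hneg.2 b hb
  nlinarith [mul_nonneg (neg_nonneg.mpr hn') (Int.cast_nonneg_iff.mpr h2)]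

section Highest
variable {h : V} (hh : B.IsHighest h)
include hh

theorem highest_isPos : B.IsPos h := by
  refine ⟨hh.1, fun a ha => ?_⟩
  have h1 := hh.2 a (B.subset ha) a ha
  rw [coeff_simple ha a ha, if_pos rfl] at h1
  omega

theorem inner_highest_simple_nonneg {a : V} (ha : a ∈ B.Δ) : 0 ≤ ⟪h, a⟫ := by
  by_contra hcon
  push_neg at hcon
  obtain ⟨n, hdiv, hform⟩ := exists_pairing (B.subset ha) hh.1
  have hmem : sref a h ∈ R.Φ := sref_root_mem (B.subset ha) hh.1
  have hn : (n : ℝ) < 0 := by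
    rw [← hdiv]
    apply div_neg_of_neg_of_pos
    · rw [real_inner_comm]; linarith
    · exact root_inner_self_pos (B.subset ha)
  have hn' : n < 0 := by exact_mod_cast hn
  have hcoeff := coeff_sub_smul (B := B) hh.1 hmem (B.subset ha) n hform a ha
  rw [coeff_simple ha a ha, if_pos rfl, mul_one] at hcoeff
  have := hh.2 (sref a h) hmem a ha
  omega

theorem inner_highest_nonneg {γ : V} (hγ : B.IsPos γ) : 0 ≤ ⟪h, γ⟫ := by
  rw [B.coeff_spec γ hγ.1, inner_sum]
  apply Finset.sum_nonneg
  intro a ha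
  rw [real_inner_smul_right]
  have h1 := hγ.2 a ha
  have h2 := inner_highest_simple_nonneg hh ha
  positivity

theorem inner_highest_nonpos {γ : V} (hγ : B.IsNeg γ) : ⟪h, γ⟫ ≤ 0 := by
  have := inner_highest_nonneg hh (isPos_neg_of_isNeg hγ.1 hγ)
  rw [inner_neg_right] at this
  linarith

theorem mem_span_Itil {γ : V} (hγ : B.IsPos γ) (h0 : ⟪h, γ⟫ = 0) :
    γ ∈ Submodule.span ℝ ((B.Itil h : Finset V) : Set V) := by
  have hsum : ∑ a ∈ B.Δ, (B.coeff γ a : ℝ) * ⟪h, a⟫ = 0 := by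
    rw [← h0]
    conv_rhs => rw [B.coeff_spec γ hγ.1]
    rw [inner_sum]
    exact Finset.sum_congr rfl fun a _ => (real_inner_smul_right _ _ _).symm
  have hterm : ∀ a ∈ B.Δ, (B.coeff γ a : ℝ) * ⟪h, a⟫ = 0 := by
    intro a ha
    have := (Finset.sum_eq_zero_iff_of_nonneg (fun a ha => by
      have h1 := hγ.2 a ha
      have h2 := inner_highest_simple_nonneg hh ha
      positivity)).mp hsum
    exact this a ha
  rw [B.coeff_spec γ hγ.1]
  apply Submodule.sum_mem
  intro a ha
  rcases mul_eq_zero.mp (hterm a ha) with hc | hi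
  · rw [hc, zero_smul]
    exact Submodule.zero_mem _
  · apply Submodule.smul_mem
    apply Submodule.subset_span
    simp only [Base.Itil, Finset.coe_filter, Set.mem_setOf_eq]
    exact ⟨ha, hi⟩

omit hh

theorem inner_eq_zero_of_mem_span_Itil {γ : V}
    (hγ : γ ∈ Submodule.span ℝ ((B.Itil h : Finset V) : Set V)) : ⟪h, γ⟫ = 0 := by
  induction hγ using Submodule.span_induction with
  | mem x hx =>
      simp only [Base.Itil, Finset.coe_filter, Set.mem_setOf_eq] at hx
      exact hx.2
  | zero => exact inner_zero_right h
  | add x y _ _ hx hy => rw [inner_add_right, hx, hy, add_zero]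
  | smul c x _ hx => rw [real_inner_smul_right, hx, mul_zero]

end Highest
end PosLemmas
section Words
variable {R : NRootSystem V} {B : Base R}

theorem mul_apply' (u v : V ≃ₗᵢ[ℝ] V) (x : V) : (u * v) x = u (v x) := rfl

/-- `L` is a word in the simple reflections expressing `w` -/
def Base.WordOf (B : Base R) (L : List V) (w : V ≃ₗᵢ[ℝ] V) : Prop :=
  (∀ a ∈ L, a ∈ B.Δ) ∧ w = (L.map sref).prod

theorem word_mem_WeylP {L : List V} {w : V ≃ₗᵢ[ℝ] V} (h : B.WordOf L w) :
    w ∈ WeylP B.Δ := by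
  obtain ⟨hmem, rfl⟩ := h
  induction L with
  | nil => exact one_mem _
  | cons a M ih =>
      rw [List.map_cons, List.prod_cons]
      exact mul_mem (Subgroup.subset_closure ⟨a, hmem a (by simp), rfl⟩)
        (ih fun b hb => hmem b (by simp [hb]))

theorem exists_word {w : V ≃ₗᵢ[ℝ] V} (hw : w ∈ WeylP B.Δ) : ∃ L, B.WordOf L w := by
  induction hw using Subgroup.closure_induction'' with
  | one => exact ⟨[], by simp, by simp⟩
  | mem u hu =>
      obtain ⟨a, ha, rfl⟩ := hu
      exact ⟨[a], by simpa using ha, by simp⟩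
  | inv_mem u hu =>
      obtain ⟨a, ha, rfl⟩ := hu
      exact ⟨[a], by simpa using ha, by simp [sref_inv]⟩
  | mul u v _ _ hu hv =>
      obtain ⟨L, hL1, hL2⟩ := hu
      obtain ⟨M, hM1, hM2⟩ := hv
      refine ⟨L ++ M, ?_, ?_⟩
      · intro b hb; rcases List.mem_append.mp hb with h | h
        exacts [hL1 b h, hM1 b h]
      · rw [List.map_append, List.prod_append, ← hL2, ← hM2]

theorem len_le_of_word {L : List V} {w : V ≃ₗᵢ[ℝ] V} (h : B.WordOf L w) :
    B.len w ≤ L.length := by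
  apply Nat.sInf_le
  refine ⟨fun i => L.get i, fun i => h.1 _ (L.get_mem i), ?_⟩
  rw [h.2]
  congr 1
  conv_lhs => rw [← List.ofFn_get L]
  rw [List.map_ofFn]
  rfl

theorem len_set_nonempty {w : V ≃ₗᵢ[ℝ] V} (hw : w ∈ WeylP B.Δ) :
    {n | ∃ g : Fin n → V, (∀ i, g i ∈ B.Δ) ∧ w = (List.ofFn fun i => sref (g i)).prod}.Nonempty := by
  obtain ⟨L, hL⟩ := exists_word hw
  refine ⟨L.length, fun i => L.get i, fun i => hL.1 _ (L.get_mem i), ?_⟩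
  rw [hL.2]
  congr 1
  conv_lhs => rw [← List.ofFn_get L]
  rw [List.map_ofFn]
  rfl

theorem exists_word_len {w : V ≃ₗᵢ[ℝ] V} (hw : w ∈ WeylP B.Δ) :
    ∃ L, B.WordOf L w ∧ L.length = B.len w := by
  have hmem := Nat.sInf_mem (len_set_nonempty hw)
  obtain ⟨g, hg1, hg2⟩ := hmem
  refine ⟨List.ofFn g, ⟨?_, ?_⟩, by simp only [List.length_ofFn]; rfl⟩
  · intro a ha
    obtain ⟨i, rfl⟩ := List.mem_ofFn.mp ha
    exact hg1 i
  · rw [List.map_ofFn]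
    exact hg2

theorem eq_one_of_len_eq_zero {w : V ≃ₗᵢ[ℝ] V} (hw : w ∈ WeylP B.Δ) (h : B.len w = 0) :
    w = 1 := by
  obtain ⟨L, hL, hlen⟩ := exists_word_len hw
  rw [h, List.length_eq_zero_iff] at hlen
  rw [hL.2, hlen]
  simp

theorem WeylP_le_Weyl : WeylP B.Δ ≤ R.Weyl :=
  Subgroup.closure_mono (Set.image_mono (by exact_mod_cast B.subset))

theorem ht_pos {γ : V} (hγ : B.IsPos γ) : 1 ≤ B.ht γ := by
  by_contra hcon
  push_neg at hcon
  have h0 : B.ht γ = 0 := le_antisymm (by omega) (Finset.sum_nonneg fun a ha => hγ.2 a ha)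
  have := (Finset.sum_eq_zero_iff_of_nonneg fun a ha => hγ.2 a ha).mp h0
  exact eq_zero_of_coeff_eq_zero (B := B) hγ.1 this

theorem exists_simple_inner_pos {γ : V} (hγ : B.IsPos γ) : ∃ a ∈ B.Δ, 0 < ⟪γ, a⟫ := by
  by_contra hcon
  push_neg at hcon
  have hlt : (0:ℝ) < ⟪γ, γ⟫ := root_inner_self_pos hγ.1
  have : ⟪γ, γ⟫ ≤ 0 := by
    nth_rewrite 1 [B.coeff_spec γ hγ.1]
    rw [sum_inner]
    apply Finset.sum_nonpos
    intro a ha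
    rw [real_inner_smul_left]
    have h1 : (0:ℝ) ≤ B.coeff γ a := by exact_mod_cast hγ.2 a ha
    have h2 := hcon a ha
    have h3 : ⟪a, γ⟫ ≤ 0 := by rwa [real_inner_comm] at h2
    exact mul_nonpos_of_nonneg_of_nonpos h1 h3
  linarith

theorem sum_coeff_simple {a : V} (ha : a ∈ B.Δ) : B.ht a = 1 := by
  rw [Base.ht]
  rw [Finset.sum_congr rfl fun b hb => coeff_simple (B := B) ha b hb]
  simp [ha]

theorem exists_conj_simple {γ : V} (hγ : B.IsPos γ) :
    ∃ w ∈ WeylP B.Δ, w γ ∈ B.Δ := by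
  obtain ⟨k, hk⟩ : ∃ k, (B.ht γ).toNat = k := ⟨_, rfl⟩
  induction k using Nat.strong_induction_on generalizing γ with
  | _ k ih =>
    by_cases hmem : γ ∈ B.Δ
    · exact ⟨1, one_mem _, by simpa using hmem⟩
    · obtain ⟨a, ha, hpos⟩ := exists_simple_inner_pos hγ
      have hne : γ ≠ a := fun h => hmem (h ▸ ha)
      obtain ⟨n, hdiv, hform⟩ := exists_pairing (B.subset ha) hγ.1
      have hδpos : B.IsPos (sref a γ) := sref_simple_isPos ha hγ hne
      have hn : (0:ℝ) < n := by
        rw [← hdiv]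
        apply div_pos
        · rw [real_inner_comm]; linarith
        · exact root_inner_self_pos (B.subset ha)
      have hn' : 1 ≤ n := by
        have : (0:ℤ) < n := by exact_mod_cast hn
        omega
      have hht : B.ht (sref a γ) = B.ht γ - n := by
        rw [Base.ht]
        rw [Finset.sum_congr rfl fun b hb =>
          coeff_sub_smul (B := B) hγ.1 (sref_root_mem (B.subset ha) hγ.1) (B.subset ha) n hform b hb]
        rw [Finset.sum_sub_distrib, ← Finset.mul_sum]
        have := sum_coeff_simple (B := B) ha
        rw [Base.ht] at this
        rw [this, mul_one]
        rfl
      have hlt : (B.ht (sref a γ)).toNat < k := by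
        have h1 := ht_pos hδpos
        have h2 := ht_pos hγ
        omega
      obtain ⟨w, hw, hwmem⟩ := ih _ hlt hδpos rfl
      refine ⟨w * sref a, mul_mem hw (Subgroup.subset_closure ⟨a, ha, rfl⟩), ?_⟩
      rw [mul_apply']
      exact hwmem

theorem sref_mem_WeylP {γ : V} (hγ : γ ∈ R.Φ) : sref γ ∈ WeylP B.Δ := by
  have key : ∀ δ : V, B.IsPos δ → sref δ ∈ WeylP B.Δ := by
    intro δ hδ
    obtain ⟨w, hw, hwmem⟩ := exists_conj_simple hδ
    have hconj := sref_conj w δ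
    have : sref δ = w⁻¹ * sref (w δ) * w := by
      rw [hconj]; group
    rw [this]
    exact mul_mem (mul_mem (inv_mem hw) (Subgroup.subset_closure ⟨w δ, hwmem, rfl⟩)) hw
  rcases pos_or_neg (B := B) hγ with h | h
  · exact key γ h
  · have := key (-γ) (isPos_neg_of_isNeg hγ h)
    rwa [sref_neg] at this

theorem Weyl_eq_WeylP : R.Weyl = WeylP B.Δ := by
  apply le_antisymm
  · rw [NRootSystem.Weyl, Subgroup.closure_le]
    rintro u ⟨γ, hγ, rfl⟩
    exact sref_mem_WeylP hγ
  · exact WeylP_le_Weyl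

end Words
section InvCount
variable {R : NRootSystem V}

/-- the number of inversions of `w` -/
def invCount (B : Base R) (w : V ≃ₗᵢ[ℝ] V) : ℕ :=
  (R.Φ.filter fun γ => B.IsPos γ ∧ B.IsNeg (w γ)).card

variable {B : Base R}

theorem invCount_eq_zero {w : V ≃ₗᵢ[ℝ] V}
    (h : ∀ γ ∈ R.Φ, B.IsPos γ → B.IsPos (w γ)) : invCount B w = 0 := by
  rw [invCount, Finset.card_eq_zero, Finset.filter_eq_empty_iff]
  rintro γ hγ ⟨hpos, hneg⟩
  exact not_pos_and_neg (h γ hγ hpos) hneg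

theorem invCount_one : invCount B 1 = 0 :=
  invCount_eq_zero fun γ _ h => h

theorem invCount_mul_sref {u : V ≃ₗᵢ[ℝ] V} (hu : u ∈ R.Weyl) {a : V} (ha : a ∈ B.Δ)
    (hpos : B.IsPos (u a)) :
    invCount B (u * sref a) = invCount B u + 1 := by
  have haΦ : a ∈ R.Φ := B.subset ha
  have hT : (R.Φ.filter fun γ => B.IsPos γ ∧ B.IsNeg ((u * sref a) γ))
      = insert a ((R.Φ.filter fun γ => B.IsPos γ ∧ B.IsNeg (u γ)).image (sref a)) := by
    ext δ
    simp only [Finset.mem_filter, Finset.mem_insert, Finset.mem_image]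
    constructor
    · rintro ⟨hδΦ, hδpos, hδneg⟩
      rw [mul_apply'] at hδneg
      by_cases hda : δ = a
      · exact Or.inl hda
      · exact Or.inr ⟨sref a δ,
          ⟨sref_root_mem haΦ hδΦ, sref_simple_isPos ha hδpos hda, hδneg⟩, sref_sref a δ⟩
    · rintro (rfl | ⟨γ, ⟨hγΦ, hγpos, hγneg⟩, rfl⟩)
      · refine ⟨haΦ, simple_isPos ha, ?_⟩
        rw [mul_apply', sref_self, map_neg]
        exact isNeg_neg_of_isPos (weyl_maps_roots hu haΦ) hpos
      · have hne : γ ≠ a := by rintro rfl; exact not_pos_and_neg hpos hγneg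
        refine ⟨sref_root_mem haΦ hγΦ, sref_simple_isPos ha hγpos hne, ?_⟩
        rw [mul_apply', sref_sref]
        exact hγneg
  have hnotmem : a ∉ (R.Φ.filter fun γ => B.IsPos γ ∧ B.IsNeg (u γ)).image (sref a) := by
    intro hmem
    obtain ⟨γ, hγ, hγa⟩ := Finset.mem_image.mp hmem
    have hγeq : γ = -a := by
      have := congrArg (sref a) hγa
      rwa [sref_sref, sref_self] at this
    obtain ⟨hγΦ, hγpos, -⟩ := Finset.mem_filter.mp hγ
    rw [hγeq] at hγpos
    exact not_pos_and_neg hγpos (isNeg_neg_of_isPos haΦ (simple_isPos ha))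
  rw [invCount, invCount, hT, Finset.card_insert_of_notMem hnotmem,
    Finset.card_image_of_injective _ (sref a).injective]

theorem invCount_mul_sref' {u : V ≃ₗᵢ[ℝ] V} (hu : u ∈ R.Weyl) {a : V} (ha : a ∈ B.Δ)
    (hneg : B.IsNeg (u a)) :
    invCount B u = invCount B (u * sref a) + 1 := by
  have h2 : B.IsPos ((u * sref a) a) := by
    rw [mul_apply', sref_self, map_neg]
    exact isPos_neg_of_isNeg (weyl_maps_roots hu (B.subset ha)) hneg
  have := invCount_mul_sref (mul_mem hu (sref_mem_weyl (B.subset ha))) ha h2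
  rw [mul_assoc, sref_mul_self, mul_one] at this
  omega

end InvCount
section LenTheory
variable {R : NRootSystem V} {B : Base R}

/-- the exchange lemma: a word times a simple reflection making the simple root
negative can be shortened -/
theorem exchange : ∀ (L : List V), (∀ b ∈ L, b ∈ B.Δ) → ∀ {a : V}, a ∈ B.Δ →
    B.IsNeg ((L.map sref).prod a) →
    ∃ M : List V, (∀ b ∈ M, b ∈ B.Δ) ∧ M.length + 1 = L.length ∧
      (L.map sref).prod * sref a = (M.map sref).prod := by
  intro L
  induction L with
  | nil =>
      intro _ a ha hneg
      exfalso
      simp only [List.map_nil, List.prod_nil] at hneg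
      exact not_pos_and_neg (simple_isPos ha) (by simpa using hneg)
  | cons b M' ih =>
      intro hL a ha hneg
      have hb : b ∈ B.Δ := hL b (by simp)
      have hM' : ∀ c ∈ M', c ∈ B.Δ := fun c hc => hL c (by simp [hc])
      set u := (M'.map sref).prod with hu
      have huW : u ∈ R.Weyl := WeylP_le_Weyl (word_mem_WeylP ⟨hM', rfl⟩)
      have huaΦ : u a ∈ R.Φ := weyl_maps_roots huW (B.subset ha)
      have hprod : ((b :: M').map sref).prod = sref b * u := by
        rw [List.map_cons, List.prod_cons]
      rcases pos_or_neg (B := B) huaΦ with hpos | hneg'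
      · -- u a positive, but sref b (u a) negative, so u a = b
        have hneg2 : B.IsNeg (sref b (u a)) := by
          rw [hprod] at hneg
          exact hneg
        have hub : u a = b := by
          by_contra hne
          exact not_pos_and_neg (sref_simple_isPos hb hpos hne) hneg2
        have hconj : sref b = u * sref a * u⁻¹ := by
          rw [← hub, sref_conj]
        refine ⟨M', hM', by simp, ?_⟩
        rw [hprod, hconj, inv_mul_cancel_right, mul_assoc, sref_mul_self, mul_one]
      · obtain ⟨N, hN1, hN2, hN3⟩ := ih hM' ha hneg'
        refine ⟨b :: N, ?_, by simp [← hN2], ?_⟩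
        · intro c hc
          rcases List.mem_cons.mp hc with rfl | hc
          exacts [hb, hN1 c hc]
        · rw [hprod, List.map_cons, List.prod_cons, ← hN3, mul_assoc]

theorem len_lt_of_simple_neg {w : V ≃ₗᵢ[ℝ] V} (hw : w ∈ R.Weyl) {a : V} (ha : a ∈ B.Δ)
    (hneg : B.IsNeg (w a)) : B.len (w * sref a) < B.len w := by
  have hw' : w ∈ WeylP B.Δ := (Weyl_eq_WeylP (B := B)) ▸ hw
  obtain ⟨L, hL, hlen⟩ := exists_word_len hw'
  have hneg' : B.IsNeg ((L.map sref).prod a) := by rw [← hL.2]; exact hneg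
  obtain ⟨M, hM1, hM2, hM3⟩ := exchange L hL.1 ha hneg'
  have : B.len (w * sref a) ≤ M.length := by
    apply len_le_of_word
    exact ⟨hM1, by rw [hL.2, hM3]⟩
  omega

theorem len_lt_of_simple_pos {w : V ≃ₗᵢ[ℝ] V} (hw : w ∈ R.Weyl) {a : V} (ha : a ∈ B.Δ)
    (hpos : B.IsPos (w a)) : B.len w < B.len (w * sref a) := by
  have h2 : B.IsNeg ((w * sref a) a) := by
    rw [mul_apply', sref_self, map_neg]
    exact isNeg_neg_of_isPos (weyl_maps_roots hw (B.subset ha)) hpos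
  have := len_lt_of_simple_neg (mul_mem hw (sref_mem_weyl (B.subset ha))) ha h2
  rwa [mul_assoc, sref_mul_self, mul_one] at this

/-- the length of a Weyl group element equals its number of inversions -/
theorem len_eq_invCount {w : V ≃ₗᵢ[ℝ] V} (hw : w ∈ R.Weyl) : B.len w = invCount B w := by
  have hw' : w ∈ WeylP B.Δ := (Weyl_eq_WeylP (B := B)) ▸ hw
  obtain ⟨k, hk⟩ : ∃ k, B.len w = k := ⟨_, rfl⟩
  induction k using Nat.strong_induction_on generalizing w with
  | _ k ih =>
    match k, hk with
    | 0, hk =>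
        rw [hk, eq_one_of_len_eq_zero hw' hk, invCount_one]
    | (k+1), hk =>
        obtain ⟨L, hL, hlen⟩ := exists_word_len hw'
        rcases L.eq_nil_or_concat with rfl | ⟨M, a, rfl⟩
        · rw [hk] at hlen; simp at hlen
        · have ha : a ∈ B.Δ := hL.1 a (by simp)
          have hM : ∀ b ∈ M, b ∈ B.Δ := fun b hb => hL.1 b (by simp [hb])
          set u := (M.map sref).prod with hu
          have huP : u ∈ WeylP B.Δ := word_mem_WeylP ⟨hM, rfl⟩
          have huW : u ∈ R.Weyl := WeylP_le_Weyl huP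
          have hwu : w = u * sref a := by
            rw [hL.2, List.concat_eq_append, List.map_append, List.prod_append]
            simp
            rfl
          have hMlen : M.length = k := by
            rw [hk] at hlen
            simp [List.concat_eq_append] at hlen
            omega
          have huaΦ : u a ∈ R.Φ := weyl_maps_roots huW (B.subset ha)
          have hupos : B.IsPos (u a) := by
            rcases pos_or_neg (B := B) huaΦ with h | h
            · exact h
            · exfalso
              have := len_lt_of_simple_neg huW ha h
              rw [← hwu] at this
              have hule : B.len u ≤ k := hMlen ▸ len_le_of_word (B := B) ⟨hM, hu⟩
              omega
          have hlenu : B.len u = k := by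
            have h1 : B.len u ≤ k := hMlen ▸ len_le_of_word (B := B) ⟨hM, hu⟩
            have h2 := len_lt_of_simple_pos huW ha hupos
            rw [← hwu] at h2
            obtain ⟨N, hN, hNlen⟩ := exists_word_len huP
            have hword : B.WordOf (N ++ [a]) w := by
              constructor
              · intro b hb
                rcases List.mem_append.mp hb with hb' | hb'
                · exact hN.1 b hb'
                · have : b = a := by simpa using hb'
                  exact this ▸ ha
              · rw [List.map_append, List.prod_append, ← hN.2, hwu]
                simp
            have h3 := len_le_of_word hword
            rw [List.length_append, hNlen] at h3
            simp at h3
            omega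
          have hinv := invCount_mul_sref huW ha hupos
          rw [← hwu] at hinv
          rw [hk, hinv, ← ih k (by omega) huW huP hlenu]
          omega

theorem eq_one_of_no_inversion {w : V ≃ₗᵢ[ℝ] V} (hw : w ∈ R.Weyl)
    (h : ∀ γ ∈ R.Φ, B.IsPos γ → B.IsPos (w γ)) : w = 1 := by
  have h1 : B.len w = 0 := by rw [len_eq_invCount hw, invCount_eq_zero h]
  exact eq_one_of_len_eq_zero ((Weyl_eq_WeylP (B := B)) ▸ hw) h1

/-- additivity of inversion counts -/
theorem invCount_mul {u v : V ≃ₗᵢ[ℝ] V} (hu : u ∈ R.Weyl) (hv : v ∈ R.Weyl)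
    (h : ∀ δ ∈ R.Φ, B.IsPos δ → B.IsNeg (u δ) → B.IsPos (v⁻¹ δ)) :
    invCount B (u * v) = invCount B u + invCount B v := by
  have hvΦ : ∀ γ ∈ R.Φ, v γ ∈ R.Φ := fun γ hγ => weyl_maps_roots hv hγ
  have hvinvΦ : ∀ γ ∈ R.Φ, v⁻¹ γ ∈ R.Φ := fun γ hγ => weyl_maps_roots (inv_mem hv) hγ
  have hvinv_apply : ∀ γ : V, v⁻¹ (v γ) = γ := by
    intro γ
    have : (v⁻¹ * v) γ = γ := by rw [inv_mul_cancel]; rfl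
    exact this
  have hv_apply : ∀ γ : V, v (v⁻¹ γ) = γ := by
    intro γ
    have : (v * v⁻¹) γ = γ := by rw [mul_inv_cancel]; rfl
    exact this
  have hsplit : (R.Φ.filter fun γ => B.IsPos γ ∧ B.IsNeg ((u * v) γ))
      = (R.Φ.filter fun γ => B.IsPos γ ∧ B.IsNeg (v γ)) ∪
        (R.Φ.filter fun γ => B.IsPos γ ∧ B.IsPos (v γ) ∧ B.IsNeg (u (v γ))) := by
    ext γ
    simp only [Finset.mem_filter, Finset.mem_union]
    constructor
    · rintro ⟨hγΦ, hγpos, hγneg⟩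
      rw [mul_apply'] at hγneg
      rcases pos_or_neg (B := B) (hvΦ γ hγΦ) with hp | hn
      · exact Or.inr ⟨hγΦ, hγpos, hp, hγneg⟩
      · exact Or.inl ⟨hγΦ, hγpos, hn⟩
    · rintro (⟨hγΦ, hγpos, hγneg⟩ | ⟨hγΦ, hγpos, hvp, hγneg⟩)
      · refine ⟨hγΦ, hγpos, ?_⟩
        rw [mul_apply']
        rcases pos_or_neg (B := B) (weyl_maps_roots hu (hvΦ γ hγΦ)) with hp | hn
        · exfalso
          have hδΦ : -(v γ) ∈ R.Φ := neg_root_mem (hvΦ γ hγΦ)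
          have hδ : B.IsPos (-(v γ)) := isPos_neg_of_isNeg (hvΦ γ hγΦ) hγneg
          have huδ : B.IsNeg (u (-(v γ))) := by
            rw [map_neg]
            exact isNeg_neg_of_isPos (weyl_maps_roots hu (hvΦ γ hγΦ)) hp
          have hkey := h _ hδΦ hδ huδ
          rw [map_neg, hvinv_apply] at hkey
          have : B.IsNeg γ := by
            have := isNeg_neg_of_isPos (neg_root_mem hγΦ) hkey
            rwa [neg_neg] at this
          exact not_pos_and_neg hγpos this
        · exact hn
      · refine ⟨hγΦ, hγpos, ?_⟩
        rw [mul_apply']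
        exact hγneg
  have hdisj : Disjoint (R.Φ.filter fun γ => B.IsPos γ ∧ B.IsNeg (v γ))
      (R.Φ.filter fun γ => B.IsPos γ ∧ B.IsPos (v γ) ∧ B.IsNeg (u (v γ))) := by
    rw [Finset.disjoint_left]
    rintro γ h1 h2
    obtain ⟨-, -, hn⟩ := Finset.mem_filter.mp h1
    obtain ⟨-, -, hp, -⟩ := Finset.mem_filter.mp h2
    exact not_pos_and_neg hp hn
  have hcard2 : (R.Φ.filter fun γ => B.IsPos γ ∧ B.IsPos (v γ) ∧ B.IsNeg (u (v γ))).card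
      = invCount B u := by
    rw [invCount]
    apply Finset.card_bij' (fun γ _ => v γ) (fun δ _ => v⁻¹ δ)
    · intro γ hγ
      obtain ⟨hγΦ, -, hp, hn⟩ := Finset.mem_filter.mp hγ
      exact Finset.mem_filter.mpr ⟨hvΦ γ hγΦ, hp, hn⟩
    · intro δ hδ
      obtain ⟨hδΦ, hδpos, hδneg⟩ := Finset.mem_filter.mp hδ
      refine Finset.mem_filter.mpr ⟨hvinvΦ δ hδΦ, h δ hδΦ hδpos hδneg, ?_, ?_⟩
      · rw [hv_apply]; exact hδpos
      · rw [hv_apply]; exact hδneg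
    · intro γ _
      exact hvinv_apply γ
    · intro δ _
      exact hv_apply δ
  rw [invCount, hsplit, Finset.card_union_of_disjoint hdisj, hcard2, invCount, add_comm]
  rfl

end LenTheory
section MainAux
theorem inv_apply_self' (v : V ≃ₗᵢ[ℝ] V) (x : V) : v⁻¹ (v x) = x := by
  have : (v⁻¹ * v) x = x := by rw [inv_mul_cancel]; rfl
  exact this

theorem apply_inv_self' (v : V ≃ₗᵢ[ℝ] V) (x : V) : v (v⁻¹ x) = x := by
  have : (v * v⁻¹) x = x := by rw [mul_inv_cancel]; rfl
  exact this
end MainAux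


/-- for every positive long root `α`, one has `x_{−α} = s_α x_α`, and the
lengths add: `l(x_{−α}) = l(s_α x_α) = l(s_α) + l(x_α)`. Here `x_α` (resp. `x_{−α}`)
is the unique element of `X_Ĩ` taking the highest root `α̃` to `α` (resp. `−α`). -/
theorem x_neg_eq_sref_mul_x (R : NRootSystem V) (B : Base R) {h : V}
    (hh : B.IsHighest h) {α : V} (hα : R.IsLong α) (hαpos : B.IsPos α)
    {x xm : V ≃ₗᵢ[ℝ] V} (hx : x ∈ B.XI (B.Itil h)) (hxα : x h = α)
    (hxm : xm ∈ B.XI (B.Itil h)) (hxmα : xm h = -α) :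
    xm = sref α * x ∧ B.len xm = B.len (sref α) + B.len x := by
  have hαΦ : α ∈ R.Φ := hα.1
  have hhΦ : h ∈ R.Φ := hh.1
  have hhpos : B.IsPos h := highest_isPos hh
  have hxW : x ∈ R.Weyl := hx.1
  have hxmW : xm ∈ R.Weyl := hxm.1
  have hsW : sref α ∈ R.Weyl := sref_mem_weyl hαΦ
  set y := sref α * x with hy
  have hyW : y ∈ R.Weyl := mul_mem hsW hxW
  have hyh : y h = -α := by
    rw [hy, mul_apply', hxα, sref_self]
  -- `y` belongs to `X_Ĩ`
  have hyXI : y ∈ B.XI (B.Itil h) := by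
    refine ⟨hyW, fun γ hγΦ hγspan hγpos => ?_⟩
    have hxγ := hx.2 γ hγΦ hγspan hγpos
    have hinner : ⟪α, x γ⟫ = 0 := by
      rw [← hxα, inner_isom]
      exact inner_eq_zero_of_mem_span_Itil (B := B) hγspan
    have : y γ = x γ := by
      rw [hy, mul_apply', sref_of_inner_eq_zero hinner]
    rw [this]
    exact hxγ
  -- uniqueness: `xm = y`
  have huniq : xm = y := by
    set w := y⁻¹ * xm with hw
    have hwW : w ∈ R.Weyl := mul_mem (inv_mem hyW) hxmW
    have hwh : w h = h := by
      rw [hw, mul_apply', hxmα, ← hyh, inv_apply_self']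
    have hclaim : ∀ γ ∈ R.Φ, B.IsPos γ → B.IsPos (w γ) := by
      intro γ hγΦ hγpos
      have hwγΦ : w γ ∈ R.Φ := weyl_maps_roots hwW hγΦ
      rcases pos_or_neg (B := B) hwγΦ with hp | hn
      · exact hp
      · exfalso
        have hinner1 : ⟪h, γ⟫ = 0 := by
          have h1 : ⟪h, γ⟫ = ⟪h, w γ⟫ := by
            rw [← inner_isom w h γ, hwh]
          have h2 : ⟪h, w γ⟫ ≤ 0 := inner_highest_nonpos hh hn
          have h3 := inner_highest_nonneg hh hγpos
          linarith
        have hinner2 : ⟪h, -(w γ)⟫ = 0 := by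
          rw [inner_neg_right]
          have h1 : ⟪h, γ⟫ = ⟪h, w γ⟫ := by
            rw [← inner_isom w h γ, hwh]
          linarith [hinner1]
        have hspan : γ ∈ Submodule.span ℝ ((B.Itil h : Finset V) : Set V) :=
          mem_span_Itil hh hγpos hinner1
        have hnwγpos : B.IsPos (-(w γ)) := isPos_neg_of_isNeg hwγΦ hn
        have hnwγΦ : -(w γ) ∈ R.Φ := neg_root_mem hwγΦ
        have hspan2 : -(w γ) ∈ Submodule.span ℝ ((B.Itil h : Finset V) : Set V) :=
          mem_span_Itil hh hnwγpos hinner2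
        have hxmγpos : B.IsPos (xm γ) := hxm.2 γ hγΦ hspan hγpos
        have hyneg : B.IsPos (y (-(w γ))) := hyXI.2 _ hnwγΦ hspan2 hnwγpos
        have hxmeq : xm γ = -(y (-(w γ))) := by
          have hyw : y * w = xm := by rw [hw, mul_inv_cancel_left]
          have : xm γ = y (w γ) := by rw [← hyw]; rfl
          rw [this, map_neg, neg_neg]
        rw [hxmeq] at hxmγpos
        exact not_pos_and_neg hxmγpos
          (isNeg_neg_of_isPos (weyl_maps_roots hyW hnwγΦ) hyneg)
    have hwone : w = 1 := eq_one_of_no_inversion hwW hclaim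
    have := hwone
    rw [hw] at this
    exact (inv_mul_eq_one.mp this).symm
  refine ⟨huniq, ?_⟩
  -- the length part
  have hkey : ∀ δ ∈ R.Φ, B.IsPos δ → B.IsNeg (sref α δ) → B.IsPos (x⁻¹ δ) := by
    intro δ hδΦ hδpos hneg
    have hip : 0 < ⟪δ, α⟫ := inner_pos_of_sref_neg hαpos hδpos hneg
    have hxinvΦ : x⁻¹ δ ∈ R.Φ := weyl_maps_roots (inv_mem hxW) hδΦ
    have hinner : 0 < ⟪h, x⁻¹ δ⟫ := by
      have h1 : ⟪h, x⁻¹ δ⟫ = ⟪x h, δ⟫ := by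
        rw [← inner_isom x h (x⁻¹ δ), apply_inv_self']
      rw [h1, hxα, real_inner_comm]
      exact hip
    rcases pos_or_neg (B := B) hxinvΦ with hp | hn
    · exact hp
    · exfalso
      have := inner_highest_nonpos hh hn
      linarith
  have hadd := invCount_mul (B := B) hsW hxW hkey
  rw [huniq, hy, len_eq_invCount hyW, len_eq_invCount hsW, len_eq_invCount hxW]
  exact hadd
end
end
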